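/- arXiv:2302.00764 — 4 statements merged into one kernel-verified Lean document; each statement's English description precedes it below -/
import Mathlib

section
/- Let p be a rational prime, K an algebraic number field with ring of integers O_K, and a ∈ O_K an element such that p divides the field norm N_{K/ℚ}(a) exactly once (i.e., p ∣ N_{K/ℚ}(a) and p² ∤ N_{K/ℚ}(a)). Then the O_K-ideal 𝔞 = ⟨p, a⟩ generated by p and a is a prime ideal with absolute norm N(𝔞) = p. -/
open NumberField

/-- If the rational prime `p` divides the field norm of `a ∈ 𝓞 K` exactly once,
then the ideal `⟨p, a⟩` of `𝓞 K` is prime with absolute norm `p`. -/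
theorem stmt_1 (p : ℕ) (hp : p.Prime) (K : Type*) [Field K] [NumberField K]
    (a : 𝓞 K) (h1 : (p : ℤ) ∣ Algebra.norm ℤ a) (h2 : ¬ ((p : ℤ) ^ 2 ∣ Algebra.norm ℤ a)) :
    (Ideal.span {(p : 𝓞 K), a}).IsPrime ∧
      Ideal.absNorm (Ideal.span {(p : 𝓞 K), a}) = p := by
  set I := Ideal.span {(p : 𝓞 K), a} with hI
  have hnorm : ∀ z : ℤ, Algebra.norm ℤ (algebraMap ℤ (𝓞 K) z)
      = z ^ Fintype.card (Module.Free.ChooseBasisIndex ℤ (𝓞 K)) :=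
    fun z => Algebra.norm_algebraMap_of_basis (Module.Free.chooseBasis ℤ (𝓞 K)) z
  -- translate hypotheses to ℕ
  have h1' : p ∣ (Algebra.norm ℤ a).natAbs := Int.natCast_dvd.mp h1
  have h2' : ¬ p ^ 2 ∣ (Algebra.norm ℤ a).natAbs := by
    intro h
    apply h2
    rw [show ((p : ℤ)) ^ 2 = ((p ^ 2 : ℕ) : ℤ) by push_cast; ring]
    exact Int.natCast_dvd.mpr h
  have ha0 : a ≠ 0 := by
    rintro rfl
    exact h2' (by simpa using dvd_zero _)
  have hspan0 : Ideal.span ({a} : Set (𝓞 K)) ≠ ⊥ := by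
    simp [Ideal.span_singleton_eq_bot, ha0]
  -- p divides the absolute norm of span {a}
  have hNa : p ∣ Ideal.absNorm (Ideal.span ({a} : Set (𝓞 K))) := by
    rwa [Ideal.absNorm_span_singleton]
  -- find a prime ideal Q dividing span {a} with p ∣ absNorm Q
  obtain ⟨Q, hQmem, hQdvd⟩ :
      ∃ Q ∈ UniqueFactorizationMonoid.normalizedFactors (Ideal.span ({a} : Set (𝓞 K))),
        p ∣ Ideal.absNorm Q := by
    have hprod := UniqueFactorizationMonoid.prod_normalizedFactors hspan0
    have : Ideal.absNorm (Ideal.span ({a} : Set (𝓞 K))) =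
        ((UniqueFactorizationMonoid.normalizedFactors
          (Ideal.span ({a} : Set (𝓞 K)))).map Ideal.absNorm).prod := by
      rw [← map_multiset_prod]
      exact congrArg Ideal.absNorm (associated_iff_eq.mp hprod).symm
    rw [this] at hNa
    obtain ⟨n, hn, hpn⟩ := hp.prime.exists_mem_multiset_dvd hNa
    obtain ⟨Q, hQ, rfl⟩ := Multiset.mem_map.mp hn
    exact ⟨Q, hQ, hpn⟩
  have hQprime : Q.IsPrime :=
    Ideal.isPrime_of_prime (UniqueFactorizationMonoid.prime_of_normalized_factor Q hQmem)
  have hQle : Ideal.span ({a} : Set (𝓞 K)) ≤ Q :=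
    Ideal.le_of_dvd (UniqueFactorizationMonoid.dvd_of_mem_normalizedFactors hQmem)
  have haQ : a ∈ Q := hQle (Ideal.subset_span rfl)
  have hQnorm_dvd : Ideal.absNorm Q ∣ (Algebra.norm ℤ a).natAbs := by
    rw [← Ideal.absNorm_span_singleton]
    exact Ideal.absNorm_dvd_absNorm_of_le hQle
  -- show (p : 𝓞 K) ∈ Q
  obtain ⟨m, hm⟩ := hQdvd
  have hpQ : (p : 𝓞 K) ∈ Q := by
    have hmem : ((p * m : ℕ) : 𝓞 K) ∈ Q := hm ▸ Ideal.absNorm_mem Q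
    push_cast at hmem
    rcases hQprime.mem_or_mem hmem with h | h
    · exact h
    · exfalso
      -- then absNorm Q ∣ m ^ finrank, leading to p^2 ∣ norm a
      have : (Ideal.absNorm Q : ℤ) ∣ Algebra.norm ℤ (algebraMap ℤ (𝓞 K) (m : ℤ)) :=
        Ideal.absNorm_dvd_norm_of_mem (by simpa using h)
      rw [hnorm] at this
      have hdvd : p * m ∣ m ^ Fintype.card (Module.Free.ChooseBasisIndex ℤ (𝓞 K)) := by
        rw [hm] at this
        exact_mod_cast this
      have hm0 : m ≠ 0 := by
        rintro rfl
        rw [mul_zero] at hm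
        have hQbot : Q = ⊥ := Ideal.absNorm_eq_zero_iff.mp hm
        exact hspan0 (le_bot_iff.mp (hQbot ▸ hQle))
      have hpm : p ∣ m := by
        have hm1 : 1 ≤ m := Nat.one_le_iff_ne_zero.mpr hm0
        rcases Nat.eq_zero_or_pos (Fintype.card (Module.Free.ChooseBasisIndex ℤ (𝓞 K))) with hn | hn
        · rw [hn, pow_zero] at hdvd
          have := Nat.le_of_dvd one_pos hdvd
          nlinarith [hp.two_le]
        · obtain ⟨n, hn'⟩ := Nat.exists_eq_succ_of_ne_zero hn.ne'
          rw [hn', pow_succ] at hdvd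
          exact hp.dvd_of_dvd_pow ((mul_dvd_mul_iff_right hm0).mp hdvd)
      obtain ⟨m', rfl⟩ := hpm
      apply h2'
      calc p ^ 2 ∣ p * (p * m') := by ring_nf; exact ⟨m', by ring⟩
        _ ∣ _ := hm ▸ hQnorm_dvd
  -- hence I ≤ Q, so I ≠ ⊤
  have hIQ : I ≤ Q := by
    rw [hI, Ideal.span_le]
    rintro x (rfl | rfl)
    · exact hpQ
    · exact haQ
  have hInetop : I ≠ ⊤ := fun h => hQprime.ne_top (top_le_iff.mp (h ▸ hIQ))
  -- absNorm I divides p ^ finrank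
  have hIp : Ideal.absNorm I ∣ p ^ Fintype.card (Module.Free.ChooseBasisIndex ℤ (𝓞 K)) := by
    have hle : Ideal.span ({(p : 𝓞 K)} : Set (𝓞 K)) ≤ I := by
      apply Ideal.span_mono; simp
    have := Ideal.absNorm_dvd_absNorm_of_le hle
    rwa [Ideal.absNorm_span_singleton, show ((p : 𝓞 K)) = algebraMap ℤ (𝓞 K) (p : ℤ) by simp,
      hnorm, Int.natAbs_pow, Int.natAbs_natCast] at this
  have hIa : Ideal.absNorm I ∣ (Algebra.norm ℤ a).natAbs := by
    have hle : Ideal.span ({a} : Set (𝓞 K)) ≤ I := by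
      apply Ideal.span_mono; simp
    have := Ideal.absNorm_dvd_absNorm_of_le hle
    rwa [Ideal.absNorm_span_singleton] at this
  obtain ⟨k, hk, hkeq⟩ := (Nat.dvd_prime_pow hp).mp hIp
  have hk1 : k ≤ 1 := by
    by_contra hk2
    apply h2'
    exact dvd_trans (pow_dvd_pow p (by omega)) (hkeq ▸ hIa)
  have hk0 : k ≠ 0 := by
    rintro rfl
    rw [pow_zero] at hkeq
    exact hInetop (Ideal.absNorm_eq_one_iff.mp hkeq)
  have habs : Ideal.absNorm I = p := by
    rw [hkeq, show k = 1 by omega, pow_one]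
  refine ⟨Ideal.isPrime_of_irreducible_absNorm ?_, habs⟩
  rw [habs]
  exact hp
end

section
/- The polynomial q(x) = x⁶ − 29x⁵ + 322x⁴ − 1714x³ + 4471x² − 5205x + 2026 is irreducible over ℚ, and its discriminant is disc(q) = 2¹⁴ · 3⁶ · 1892022169. -/
open Polynomial

/-- The discriminant of a (monic) integer polynomial `f`, computed in `ℂ` as
`(-1)^(n(n-1)/2) · ∏_{f(r)=0} f'(r)`, the product running over the roots of `f` in `ℂ`
with multiplicity.  For monic `f` this agrees with the classical polynomial discriminant. -/
noncomputable def polyDisc (f : Polynomial ℤ) : ℂ :=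
  (-1) ^ (f.natDegree * (f.natDegree - 1) / 2) *
    (((f.map (Int.castRingHom ℂ)).roots).map
      (fun r => Polynomial.eval r (Polynomial.derivative (f.map (Int.castRingHom ℂ))))).prod

/-- `q(x) = x⁶ − 29x⁵ + 322x⁴ − 1714x³ + 4471x² − 5205x + 2026` over `ℤ`. -/
noncomputable def qZ : Polynomial ℤ :=
  X ^ 6 - 29 * X ^ 5 + 322 * X ^ 4 - 1714 * X ^ 3 + 4471 * X ^ 2 - 5205 * X + 2026

noncomputable def Pp (A B : Polynomial ℂ) : ℂ :=
  ((A.roots).map (fun r => B.eval r)).prod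

lemma Pp_step (A B R : Polynomial ℂ) (c : ℂ)
    (h : ∀ r : ℂ, A.eval r = 0 → B.eval r = c * R.eval r) :
    Pp A B = c ^ (Multiset.card A.roots) * Pp A R := by
  unfold Pp
  rw [Multiset.map_congr rfl (fun r hr => h r (isRoot_of_mem_roots hr))]
  rw [show (fun r : ℂ => c * R.eval r) = fun r => (fun _ : ℂ => c) r * (fun r => R.eval r) r from rfl,
    Multiset.prod_map_mul, Multiset.map_const', Multiset.prod_replicate]

lemma Pp_C (A : Polynomial ℂ) (c : ℂ) : Pp A (C c) = c ^ (Multiset.card A.roots) := by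
  simp [Pp, Multiset.map_const', Multiset.prod_replicate]

lemma card_roots_complex (A : Polynomial ℂ) : Multiset.card A.roots = A.natDegree :=
  (splits_iff_card_roots).mp (IsAlgClosed.splits A)

lemma eval_eq_prod (B : Polynomial ℂ) (z : ℂ) :
    B.eval z = B.leadingCoeff * ((B.roots).map (fun s => z - s)).prod := by
  conv_lhs => rw [(IsAlgClosed.splits B).eq_prod_roots]
  simp [eval_multiset_prod, Multiset.map_map, Function.comp]

lemma Pp_swap (A B : Polynomial ℂ) :
    A.leadingCoeff ^ (Multiset.card B.roots) * Pp A B =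
      (-1) ^ (Multiset.card A.roots * Multiset.card B.roots) *
        B.leadingCoeff ^ (Multiset.card A.roots) * Pp B A := by
  have key : ∀ (A B : Polynomial ℂ), Pp A B =
      B.leadingCoeff ^ (Multiset.card A.roots) *
        ((A.roots).map (fun r => ((B.roots).map (fun s => r - s)).prod)).prod := by
    intro A B
    unfold Pp
    rw [Multiset.map_congr rfl (fun r _ => eval_eq_prod B r)]
    rw [show (fun r : ℂ => B.leadingCoeff * ((B.roots).map (fun s => r - s)).prod)
        = fun r => (fun _ : ℂ => B.leadingCoeff) r *
            (fun r => ((B.roots).map (fun s => r - s)).prod) r from rfl,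
      Multiset.prod_map_mul, Multiset.map_const', Multiset.prod_replicate]
  rw [key A B, key B A]
  have hinner : ∀ s : ℂ, ((A.roots).map (fun r => r - s)).prod
      = (-1) ^ (Multiset.card A.roots) * ((A.roots).map (fun r => s - r)).prod := by
    intro s
    rw [Multiset.map_congr rfl (fun r _ => show r - s = (fun _ : ℂ => (-1:ℂ)) r * (fun r => s - r) r by ring)]
    rw [Multiset.prod_map_mul, Multiset.map_const', Multiset.prod_replicate]
  have hdouble : ((A.roots).map (fun r => ((B.roots).map (fun s => r - s)).prod)).prod
      = (-1) ^ (Multiset.card A.roots * Multiset.card B.roots) *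
        ((B.roots).map (fun s => ((A.roots).map (fun r => s - r)).prod)).prod := by
    rw [Multiset.prod_map_prod_map]
    rw [Multiset.map_congr rfl (fun s _ => hinner s)]
    rw [show (fun s : ℂ => (-1:ℂ) ^ (Multiset.card A.roots) * ((A.roots).map (fun r => s - r)).prod)
        = fun s => (fun _ : ℂ => (-1:ℂ) ^ (Multiset.card A.roots)) s *
            (fun s => ((A.roots).map (fun r => s - r)).prod) s from rfl,
      Multiset.prod_map_mul, Multiset.map_const', Multiset.prod_replicate, ← pow_mul]
  rw [hdouble]
  ring

noncomputable def R0 : Polynomial ℂ :=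
  X ^ 6 - 29 * X ^ 5 + 322 * X ^ 4 - 1714 * X ^ 3 + 4471 * X ^ 2 - 5205 * X + 2026
noncomputable def R1 : Polynomial ℂ :=
  6 * X ^ 5 - 145 * X ^ 4 + 1288 * X ^ 3 - 5142 * X ^ 2 + 8942 * X - 5205
noncomputable def R2 : Polynomial ℂ :=
  341 * X ^ 4 - 6500 * X ^ 3 + 41814 * X ^ 2 - 103168 * X + 78009
noncomputable def R3 : Polynomial ℂ :=
  51028 * X ^ 3 - 693223 * X ^ 2 + 2741826 * X - 2910575
noncomputable def R4 : Polynomial ℂ :=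
  4673427 * X ^ 2 - 41363030 * X + 70932611
noncomputable def R5 : Polynomial ℂ :=
  358392197 * X - 1585834181

lemma R0deg : R0.natDegree = 6 := by unfold R0; compute_degree!
lemma R0lc : R0.leadingCoeff = 1 := by
  rw [Polynomial.leadingCoeff, R0deg]; unfold R0; compute_degree!
lemma R0card : Multiset.card R0.roots = 6 := by rw [card_roots_complex, R0deg]
lemma R1deg : R1.natDegree = 5 := by unfold R1; compute_degree!
lemma R1lc : R1.leadingCoeff = 6 := by
  rw [Polynomial.leadingCoeff, R1deg]; unfold R1; compute_degree!
lemma R1card : Multiset.card R1.roots = 5 := by rw [card_roots_complex, R1deg]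
lemma R2deg : R2.natDegree = 4 := by unfold R2; compute_degree!
lemma R2lc : R2.leadingCoeff = 341 := by
  rw [Polynomial.leadingCoeff, R2deg]; unfold R2; compute_degree!
lemma R2card : Multiset.card R2.roots = 4 := by rw [card_roots_complex, R2deg]
lemma R3deg : R3.natDegree = 3 := by unfold R3; compute_degree!
lemma R3lc : R3.leadingCoeff = 51028 := by
  rw [Polynomial.leadingCoeff, R3deg]; unfold R3; compute_degree!
lemma R3card : Multiset.card R3.roots = 3 := by rw [card_roots_complex, R3deg]
lemma R4deg : R4.natDegree = 2 := by unfold R4; compute_degree!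
lemma R4lc : R4.leadingCoeff = 4673427 := by
  rw [Polynomial.leadingCoeff, R4deg]; unfold R4; compute_degree!
lemma R4card : Multiset.card R4.roots = 2 := by rw [card_roots_complex, R4deg]
lemma R5deg : R5.natDegree = 1 := by unfold R5; compute_degree!
lemma R5lc : R5.leadingCoeff = 358392197 := by
  rw [Polynomial.leadingCoeff, R5deg]; unfold R5; compute_degree!
lemma R5card : Multiset.card R5.roots = 1 := by rw [card_roots_complex, R5deg]

lemma step1 : Pp R1 R0 = ((-1 : ℂ) / 36) ^ (Multiset.card R1.roots) * Pp R1 R2 :=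
  Pp_step _ _ _ _ (by
    intro r hr
    simp [R0, R1, R2] at hr ⊢
    linear_combination (((-29 : ℂ) / 36) + ((1 : ℂ) / 6) * r) * hr)
lemma step2 : Pp R2 R1 = ((-72 : ℂ) / 116281) ^ (Multiset.card R2.roots) * Pp R2 R3 :=
  Pp_step _ _ _ _ (by
    intro r hr
    simp [R1, R2, R3] at hr ⊢
    linear_combination (((-10445 : ℂ) / 116281) + ((6 : ℂ) / 341) * r) * hr)
lemma step3 : Pp R3 R2 = ((-1046529 : ℂ) / 2603856784) ^ (Multiset.card R3.roots) * Pp R3 R4 :=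
  Pp_step _ _ _ _ (by
    intro r hr
    simp [R2, R3, R4] at hr ⊢
    linear_combination (((-95292957 : ℂ) / 2603856784) + ((341 : ℂ) / 51028) * r) * hr)
lemma step4 : Pp R4 R3 = ((-10415427136 : ℂ) / 21840919924329) ^ (Multiset.card R4.roots) * Pp R4 R5 :=
  Pp_step _ _ _ _ (by
    intro r hr
    simp [R3, R4, R5] at hr ⊢
    linear_combination (((-1129054390381 : ℂ) / 21840919924329) + ((51028 : ℂ) / 4673427) * r) * hr)
lemma step5 : Pp R5 R4 = ((-2644704300043793308774464 : ℂ) / 128444966870486809) ^ (Multiset.card R5.roots) * Pp R5 (C (1:ℂ)) :=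
  Pp_step _ _ _ _ (by
    intro r hr
    simp [R4, R5] at hr ⊢
    linear_combination (((-7412906917268623 : ℂ) / 128444966870486809) + ((4673427 : ℂ) / 358392197) * r) * hr)

lemma v54 : Pp R5 R4 = ((-2644704300043793308774464 : ℂ) / 128444966870486809) := by
  rw [step5, R5card, Pp_C]; norm_num
lemma v45 : Pp R4 R5 = (-565902559309002432 : ℂ) := by
  have hs := Pp_swap R4 R5
  rw [R4card, R5card, R4lc, R5lc, v54] at hs
  linear_combination ((1 : ℂ) / 4673427) * hs
lemma v43 : Pp R4 R3 = ((-13135916066989968286461399924736 : ℂ) / 102071944879197105483) := by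
  rw [step4, R4card, v45]; norm_num
lemma v34 : Pp R3 R4 = (-5044792074474541563904 : ℂ) := by
  have hs := Pp_swap R3 R4
  rw [R3card, R4card, R3lc, R4lc, v43] at hs
  linear_combination ((1 : ℂ) / 2603856784) * hs
lemma v32 : Pp R3 R2 = ((8674411376938261721833700964 : ℂ) / 26484649029620401) := by
  rw [step3, R3card, v34]; norm_num
lemma v23 : Pp R2 R3 = (56003715756111049749504 : ℂ) := by
  have hs := Pp_swap R2 R3
  rw [R2card, R3card, R2lc, R3lc, v32] at hs
  linear_combination ((1 : ℂ) / 39651821) * hs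
lemma v21 : Pp R2 R1 = ((37956284345545176121344 : ℂ) / 4610753397701) := by
  rw [step2, R2card, v23]; norm_num
lemma v12 : Pp R1 R2 = (29287256439463870464 : ℂ) := by
  have hs := Pp_swap R1 R2
  rw [R1card, R2card, R1lc, R2lc, v21] at hs
  linear_combination ((1 : ℂ) / 1296) * hs
lemma v10 : Pp R1 R0 = (-484357675264 : ℂ) := by
  rw [step1, R1card, v12]; norm_num
lemma v01 : Pp R0 R1 = (-22598191697117184 : ℂ) := by
  have hs := Pp_swap R0 R1
  rw [R0card, R1card, R0lc, R1lc, v10] at hs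
  linear_combination (1 : ℂ) * hs


instance : Fact (Nat.Prime 3) := ⟨by norm_num⟩
instance : Fact (Nat.Prime 5) := ⟨by norm_num⟩


lemma three_eq_zero : (3 : Polynomial (ZMod 3)) = 0 := by
  have : ((3:ℕ) : Polynomial (ZMod 3)) = Polynomial.C ((3:ℕ) : ZMod 3) := by
    rw [Polynomial.C_eq_natCast]
  norm_num at this
  rw [this, show ((3:ZMod 3)) = 0 from rfl, map_zero]

lemma five_eq_zero : (5 : Polynomial (ZMod 5)) = 0 := by
  have : ((5:ℕ) : Polynomial (ZMod 5)) = Polynomial.C ((5:ℕ) : ZMod 5) := by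
    rw [Polynomial.C_eq_natCast]
  norm_num at this
  rw [this, show ((5:ZMod 5)) = 0 from rfl, map_zero]

noncomputable def c3 : Polynomial (ZMod 3) := X ^ 3 + 2 * X ^ 2 + 1
noncomputable def d2 : Polynomial (ZMod 5) := X ^ 2 + 3 * X + 4
noncomputable def d4 : Polynomial (ZMod 5) := X ^ 4 + 3 * X ^ 3 + 4 * X ^ 2 + 2 * X + 4

lemma c3deg : c3.natDegree = 3 := by unfold c3; compute_degree!
lemma c3monic : c3.Monic := by
  rw [Polynomial.Monic, Polynomial.leadingCoeff, c3deg]; unfold c3; compute_degree!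
lemma c3ne : c3 ≠ 0 := c3monic.ne_zero
lemma d2deg : d2.natDegree = 2 := by unfold d2; compute_degree!
lemma d2monic : d2.Monic := by
  rw [Polynomial.Monic, Polynomial.leadingCoeff, d2deg]; unfold d2; compute_degree!
lemma d4deg : d4.natDegree = 4 := by unfold d4; compute_degree!
lemma d4ne : d4 ≠ 0 := by
  intro h
  have := d4deg
  rw [h] at this
  simp at this

lemma hq3 : qZ.map (Int.castRingHom (ZMod 3)) = c3 * c3 := by
  have key : qZ = (X ^ 3 + 2 * X ^ 2 + 1) * (X ^ 3 + 2 * X ^ 2 + 1) +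
      3 * (-11 * X ^ 5 + 106 * X ^ 4 - 572 * X ^ 3 + 1489 * X ^ 2 - 1735 * X + 675) := by
    unfold qZ; ring
  rw [key]
  simp only [Polynomial.map_add, Polynomial.map_mul, Polynomial.map_sub, Polynomial.map_pow,
    Polynomial.map_X, Polynomial.map_ofNat, Polynomial.map_one, Polynomial.map_neg]
  rw [three_eq_zero]
  unfold c3
  ring

lemma hq5 : qZ.map (Int.castRingHom (ZMod 5)) = d2 * d4 := by
  have key : qZ = (X ^ 2 + 3 * X + 4) * (X ^ 4 + 3 * X ^ 3 + 4 * X ^ 2 + 2 * X + 4) +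
      5 * (-7 * X ^ 5 + 61 * X ^ 4 - 348 * X ^ 3 + 889 * X ^ 2 - 1045 * X + 402) := by
    unfold qZ; ring
  rw [key]
  simp only [Polynomial.map_add, Polynomial.map_mul, Polynomial.map_sub, Polynomial.map_pow,
    Polynomial.map_X, Polynomial.map_ofNat, Polynomial.map_one, Polynomial.map_neg]
  rw [five_eq_zero]
  unfold d2 d4
  ring

lemma c3irr : Irreducible c3 := by
  rw [c3monic.irreducible_iff_roots_eq_zero_of_degree_le_three
    (by norm_num [c3deg]) (by norm_num [c3deg])]
  rw [Multiset.eq_zero_iff_forall_notMem]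
  intro x hx
  have h : c3.eval x = 0 := isRoot_of_mem_roots hx
  clear hx
  simp only [c3, eval_add, eval_mul, eval_pow, eval_X, eval_one, eval_ofNat] at h
  revert h
  revert x
  decide

lemma d2irr : Irreducible d2 := by
  rw [d2monic.irreducible_iff_roots_eq_zero_of_degree_le_three
    (by norm_num [d2deg]) (by norm_num [d2deg])]
  rw [Multiset.eq_zero_iff_forall_notMem]
  intro x hx
  have h : d2.eval x = 0 := isRoot_of_mem_roots hx
  clear hx
  simp only [d2, eval_add, eval_mul, eval_pow, eval_X, eval_ofNat] at h
  revert h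
  revert x
  decide

lemma q5_no_root : ∀ x : ZMod 5, (qZ.map (Int.castRingHom (ZMod 5))).eval x ≠ 0 := by
  intro x h
  rw [hq5] at h
  simp only [d2, d4, eval_mul, eval_add, eval_pow, eval_X, eval_ofNat] at h
  revert h
  revert x
  decide



-- generic: divisor of product of an irreducible with itself
lemma dvd_sq_natDegree {K : Type*} [Field K] {c d : Polynomial K} (hc : Irreducible c)
    (hd : d ∣ c * c) :
    d.natDegree = 0 ∨ d.natDegree = c.natDegree ∨ d.natDegree = 2 * c.natDegree := by
  have hc0 : c ≠ 0 := hc.ne_zero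
  by_cases h1 : c ∣ d
  · obtain ⟨e, rfl⟩ := h1
    have he : e ∣ c := (mul_dvd_mul_iff_left hc0).mp hd
    by_cases he0 : e = 0
    · subst he0
      simp
    obtain ⟨f, hf⟩ := he
    have hf0 : f ≠ 0 := by
      intro h; rw [h, mul_zero] at hf; exact hc0 hf
    rcases hc.isUnit_or_isUnit hf with hu | hu
    · right; left
      rw [natDegree_mul hc0 he0, natDegree_eq_zero_of_isUnit hu, add_zero]
    · right; right
      have : c.natDegree = e.natDegree + f.natDegree := by
        rw [hf, natDegree_mul he0 hf0]
      rw [natDegree_eq_zero_of_isUnit hu, add_zero] at this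
      rw [natDegree_mul hc0 he0, ← this, two_mul]
  · have hcop : IsCoprime c d := (hc.coprime_iff_not_dvd).mpr h1
    have hdc : d ∣ c := hcop.symm.dvd_of_dvd_mul_left hd
    by_cases hd0 : d = 0
    · subst hd0; simp
    obtain ⟨f, hf⟩ := hdc
    have hf0 : f ≠ 0 := by
      intro h; rw [h, mul_zero] at hf; exact hc0 hf
    rcases hc.isUnit_or_isUnit hf with hu | hu
    · left
      exact natDegree_eq_zero_of_isUnit hu
    · right; left
      have : c.natDegree = d.natDegree + f.natDegree := by
        rw [hf, natDegree_mul hd0 hf0]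
      rw [natDegree_eq_zero_of_isUnit hu, add_zero] at this
      omega

lemma linear_has_root {K : Type*} [Field K] {e : Polynomial K} (h : e.natDegree = 1) :
    ∃ r, e.eval r = 0 := by
  have he0 : e ≠ 0 := by intro h0; rw [h0, natDegree_zero] at h; exact one_ne_zero h.symm
  have hc1 : e.coeff 1 ≠ 0 := by
    have := Polynomial.leadingCoeff_ne_zero.mpr he0
    rwa [Polynomial.leadingCoeff, h] at this
  have he := Polynomial.eq_X_add_C_of_natDegree_le_one (le_of_eq h)
  refine ⟨-(e.coeff 0) / (e.coeff 1), ?_⟩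
  conv_lhs => rw [he]
  simp
  field_simp
  ring


lemma no_deg3 (d : Polynomial (ZMod 5)) (hd : d ∣ qZ.map (Int.castRingHom (ZMod 5))) :
    d.natDegree ≠ 3 := by
  intro hdeg
  have hd2ne : d2 ≠ 0 := d2monic.ne_zero
  have hdne : d ≠ 0 := by intro h; rw [h, natDegree_zero] at hdeg; omega
  have hd' : d ∣ d2 * d4 := by rwa [hq5] at hd
  have hroot : ∀ e : Polynomial (ZMod 5), e.natDegree = 1 →
      e ∣ qZ.map (Int.castRingHom (ZMod 5)) → False := by
    intro e he hdvd
    obtain ⟨r, hr⟩ := linear_has_root he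
    exact q5_no_root r (eval_eq_zero_of_dvd_of_eval_eq_zero hdvd hr)
  by_cases h1 : d2 ∣ d
  · obtain ⟨e, rfl⟩ := h1
    have he : e ∣ d4 := (mul_dvd_mul_iff_left hd2ne).mp hd'
    have he0 : e ≠ 0 := by intro h; rw [h, mul_zero] at hdne; exact hdne rfl
    have hedeg : e.natDegree = 1 := by
      have hm : (d2 * e).natDegree = d2.natDegree + e.natDegree := natDegree_mul hd2ne he0
      rw [hdeg, d2deg] at hm
      omega
    exact hroot e hedeg (dvd_trans (dvd_mul_left e d2) hd)
  · have hcop : IsCoprime d2 d := (d2irr.coprime_iff_not_dvd).mpr h1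
    have hd4 : d ∣ d4 := hcop.symm.dvd_of_dvd_mul_left hd'
    obtain ⟨l, hl⟩ := hd4
    have hl0 : l ≠ 0 := by intro h; rw [h, mul_zero] at hl; exact d4ne hl
    have hldeg : l.natDegree = 1 := by
      have hm : d4.natDegree = d.natDegree + l.natDegree := by
        rw [hl, natDegree_mul hdne hl0]
      rw [d4deg, hdeg] at hm
      omega
    have hlq : l ∣ qZ.map (Int.castRingHom (ZMod 5)) := by
      rw [hq5]
      exact dvd_trans (Dvd.intro_left d hl.symm) (dvd_mul_left d4 d2)
    exact hroot l hldeg hlq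

lemma qZdeg : qZ.natDegree = 6 := by unfold qZ; compute_degree!

lemma qZmonic : qZ.Monic := by
  rw [Polynomial.Monic, Polynomial.leadingCoeff, qZdeg]; unfold qZ; compute_degree!

lemma qZ_irred : Irreducible qZ := by
  constructor
  · intro hu
    have := natDegree_eq_zero_of_isUnit hu
    rw [qZdeg] at this
    omega
  · intro a b hab
    have hq0 : qZ ≠ 0 := qZmonic.ne_zero
    have ha0 : a ≠ 0 := by rintro rfl; rw [zero_mul] at hab; exact hq0 hab
    have hb0 : b ≠ 0 := by rintro rfl; rw [mul_zero] at hab; exact hq0 hab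
    have hlc : a.leadingCoeff * b.leadingCoeff = 1 := by
      rw [← leadingCoeff_mul, ← hab]; exact qZmonic
    have halc : IsUnit a.leadingCoeff := IsUnit.of_mul_eq_one _ hlc
    have hblc : IsUnit b.leadingCoeff := IsUnit.of_mul_eq_one _ (by rwa [mul_comm] at hlc)
    have hdegs : a.natDegree + b.natDegree = 6 := by
      rw [← natDegree_mul ha0 hb0, ← hab, qZdeg]
    have halc' : a.leadingCoeff = 1 ∨ a.leadingCoeff = -1 := Int.isUnit_iff.mp halc
    have hmap3 : (a.map (Int.castRingHom (ZMod 3))).natDegree = a.natDegree :=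
      natDegree_map_of_leadingCoeff_ne_zero _
        (by rcases halc' with h | h <;> rw [h] <;> decide)
    have hdvd3 : (a.map (Int.castRingHom (ZMod 3))) ∣ qZ.map (Int.castRingHom (ZMod 3)) :=
      ⟨b.map (Int.castRingHom (ZMod 3)), by rw [hab, Polynomial.map_mul]⟩
    rw [hq3] at hdvd3
    have h3 := dvd_sq_natDegree c3irr hdvd3
    rw [hmap3, c3deg] at h3
    have hne3 : a.natDegree ≠ 3 := by
      intro h3eq
      have hmap5 : (a.map (Int.castRingHom (ZMod 5))).natDegree = a.natDegree :=
        natDegree_map_of_leadingCoeff_ne_zero _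
          (by rcases halc' with h | h <;> rw [h] <;> decide)
      have hdvd5 : (a.map (Int.castRingHom (ZMod 5))) ∣ qZ.map (Int.castRingHom (ZMod 5)) :=
        ⟨b.map (Int.castRingHom (ZMod 5)), by rw [hab, Polynomial.map_mul]⟩
      exact no_deg3 _ hdvd5 (by rw [hmap5, h3eq])
    rcases h3 with h0 | h3' | h6
    · left
      have ha : a = C (a.coeff 0) := eq_C_of_natDegree_eq_zero h0
      have : a.leadingCoeff = a.coeff 0 := by rw [Polynomial.leadingCoeff, h0]
      rw [ha]
      exact Polynomial.isUnit_C.mpr (this ▸ halc)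
    · exact absurd h3' hne3
    · right
      have hb : b.natDegree = 0 := by omega
      have hbC : b = C (b.coeff 0) := eq_C_of_natDegree_eq_zero hb
      have : b.leadingCoeff = b.coeff 0 := by rw [Polynomial.leadingCoeff, hb]
      rw [hbC]
      exact Polynomial.isUnit_C.mpr (this ▸ hblc)

lemma qZ_irred_Q : Irreducible (qZ.map (Int.castRingHom ℚ)) :=
  (Polynomial.IsPrimitive.Int.irreducible_iff_irreducible_map_cast qZmonic.isPrimitive).mp
    qZ_irred

lemma disc_final : polyDisc qZ = ((2 ^ 14 * 3 ^ 6 * 1892022169 : ℤ) : ℂ) := by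
  have hmap : qZ.map (Int.castRingHom ℂ) = R0 := by
    simp [qZ, R0, Polynomial.map_add, Polynomial.map_sub, Polynomial.map_mul,
      Polynomial.map_pow, Polynomial.map_ofNat]
  have hder : derivative R0 = R1 := by
    simp only [R0, R1, derivative_add, derivative_sub, derivative_mul, derivative_X_pow,
      derivative_ofNat, derivative_X, map_ofNat, Polynomial.C_eq_natCast, Nat.cast_ofNat]
    push_cast
    ring
  unfold polyDisc
  rw [qZdeg, hmap, hder]
  have hPp : ((R0.roots).map (fun r => eval r R1)).prod = Pp R0 R1 := rfl
  rw [hPp, v01]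
  norm_num

/-- `q` is irreducible over `ℚ` and `disc q = 2¹⁴ · 3⁶ · 1892022169`. -/
theorem stmt_4 :
    Irreducible (qZ.map (Int.castRingHom ℚ)) ∧
      polyDisc qZ = ((2 ^ 14 * 3 ^ 6 * 1892022169 : ℤ) : ℂ) := by
  exact ⟨qZ_irred_Q, disc_final⟩
end

section
/- Let a be a root of q₇(x) = x⁷ − 30x⁶ + 357x⁵ − 2157x⁴ + 7034x³ − 12145x² + 9964x − 2832, K = ℚ(a), and set w = 134943/2 − (1626701/8)a + (6689239/32)a² − (2996715/32)a³ + (80271/4)a⁴ − (64895/32)a⁵ + (2479/32)a⁶. Then w is an algebraic integer (lies in O_K), its field norm is N_{K/ℚ}(w) = −2⁷ · 3 · 3919 · 1941571 · 8583739212883, and the O_K-ideal ⟨3, w⟩ equals the prime ideal ⟨3, a⟩ of absolute norm 3. -/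
open Polynomial

section Helpers

lemma monic_eq_of_dvd_deg {p q : ℚ[X]} (hp : p.Monic) (hq : q.Monic) (h : p ∣ q)
    (hdeg : q.natDegree ≤ p.natDegree) : p = q := by
  obtain ⟨c, rfl⟩ := h
  have hp0 : p ≠ 0 := hp.ne_zero
  have hq0 : p * c ≠ 0 := hq.ne_zero
  have hc0 : c ≠ 0 := right_ne_zero_of_mul hq0
  have hnd := Polynomial.natDegree_mul hp0 hc0
  have hdc : c.natDegree = 0 := by omega
  have hlc : c.Monic := by
    have h2 := hq
    unfold Polynomial.Monic at h2 ⊢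
    rwa [Polynomial.leadingCoeff_mul, hp.leadingCoeff, one_mul] at h2
  rw [Polynomial.eq_one_of_monic_natDegree_zero hlc hdc, mul_one]

lemma pow_step {R : Type*} [CommRing R] {f ta tb tc c : R[X]} {A B n : ℕ}
    (hn : A + B = n)
    (hA : ∃ u : R[X], (X : R[X]) ^ A = u * f + ta) (hB : ∃ u : R[X], (X : R[X]) ^ B = u * f + tb)
    (h : ta * tb = c * f + tc) : ∃ u : R[X], (X : R[X]) ^ n = u * f + tc := by
  obtain ⟨u1, h1⟩ := hA
  obtain ⟨u2, h2⟩ := hB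
  exact ⟨u1 * u2 * f + u1 * tb + ta * u2 + c, by rw [← hn, pow_add, h1, h2]; linear_combination h⟩

/-- A monic polynomial of degree 7 over a finite field with no irreducible factor of degree
at most 3 (detected by coprimality with `X^(q^2) - X` and `X^(q^3) - X`) is irreducible. -/
lemma irreducible_of_coprime_card_pow {F : Type*} [Field F] [Fintype F] {f : F[X]}
    (hm : f.Monic) (hd : f.natDegree = 7)
    (h2 : IsCoprime f (X ^ (Fintype.card F ^ 2) - X))
    (h3 : IsCoprime f (X ^ (Fintype.card F ^ 3) - X)) : Irreducible f := by
  have hf0 : f ≠ 0 := hm.ne_zero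
  have key : ∀ π : F[X], Irreducible π → π ∣ f → π.natDegree ≤ 3 → False := by
    intro π hirr hdvd hle
    have hπ0 : π ≠ 0 := hirr.ne_zero
    have hd1 : 0 < π.natDegree := hirr.natDegree_pos
    haveI : Fact (Irreducible π) := ⟨hirr⟩
    have hfin : Finite (AdjoinRoot π) :=
      Finite.of_equiv _ ((AdjoinRoot.powerBasis hπ0).basis.repr.toEquiv).symm
    letI : Fintype (AdjoinRoot π) := Fintype.ofFinite _
    have hcard : Fintype.card (AdjoinRoot π) = Fintype.card F ^ π.natDegree := by
      rw [Module.card_eq_pow_finrank (K := F), (AdjoinRoot.powerBasis hπ0).finrank,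
        AdjoinRoot.powerBasis_dim]
    have hroot : (AdjoinRoot.root π) ^ (Fintype.card F ^ π.natDegree) = AdjoinRoot.root π := by
      rw [← hcard]; exact FiniteField.pow_card _
    have hiter : ∀ m : ℕ,
        (AdjoinRoot.root π) ^ (Fintype.card F ^ π.natDegree) ^ m = AdjoinRoot.root π := by
      intro m
      induction m with
      | zero => simp
      | succ n ih => rw [pow_succ, pow_mul, ih, hroot]
    have hdvdk : ∀ k : ℕ, π.natDegree ∣ k → π ∣ X ^ (Fintype.card F ^ k) - X := by
      rintro k ⟨m, rfl⟩
      rw [← AdjoinRoot.mk_eq_zero, map_sub, map_pow, AdjoinRoot.mk_X, pow_mul, hiter m, sub_self]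
    have hcases : π.natDegree = 1 ∨ π.natDegree = 2 ∨ π.natDegree = 3 := by omega
    have hunit : IsUnit π := by
      rcases hcases with h1 | h2' | h3'
      · exact h2.isUnit_of_dvd' hdvd (hdvdk 2 (by rw [h1]; exact ⟨2, by norm_num⟩))
      · exact h2.isUnit_of_dvd' hdvd (hdvdk 2 (by rw [h2']))
      · exact h3.isUnit_of_dvd' hdvd (hdvdk 3 (by rw [h3']))
    exact hirr.not_isUnit hunit
  constructor
  · intro hu
    have := Polynomial.natDegree_eq_zero_of_isUnit hu
    omega
  · intro g h hf
    by_contra hcon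
    push_neg at hcon
    obtain ⟨hgu, hhu⟩ := hcon
    have hg0 : g ≠ 0 := fun h0 => hf0 (by rw [hf, h0, zero_mul])
    have hh0 : h ≠ 0 := fun h0 => hf0 (by rw [hf, h0, mul_zero])
    have hsum : g.natDegree + h.natDegree = 7 := by
      rw [← Polynomial.natDegree_mul hg0 hh0, ← hf, hd]
    have hg1 : 0 < g.natDegree := by
      rcases Nat.eq_zero_or_pos g.natDegree with h0 | h1
      · exact absurd (Polynomial.isUnit_iff_degree_eq_zero.mpr
          (by rw [Polynomial.degree_eq_natDegree hg0, h0]; rfl)) hgu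
      · exact h1
    have hh1 : 0 < h.natDegree := by
      rcases Nat.eq_zero_or_pos h.natDegree with h0 | h1
      · exact absurd (Polynomial.isUnit_iff_degree_eq_zero.mpr
          (by rw [Polynomial.degree_eq_natDegree hh0, h0]; rfl)) hhu
      · exact h1
    have hsmall : ∃ g' : F[X], g' ∣ f ∧ 0 < g'.natDegree ∧ g'.natDegree ≤ 3 := by
      rcases le_or_gt g.natDegree 3 with hle | hlt
      · exact ⟨g, ⟨h, hf⟩, hg1, hle⟩
      · exact ⟨h, ⟨g, by rw [hf, mul_comm]⟩, hh1, by omega⟩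
    obtain ⟨g', hdvd', hpos', hle'⟩ := hsmall
    have hg'0 : g' ≠ 0 := fun h0 => by simp [h0] at hpos'
    obtain ⟨π, _, hπirr, hπdvd⟩ := g'.exists_monic_irreducible_factor (by
      intro hu
      have := Polynomial.natDegree_eq_zero_of_isUnit hu
      omega)
    exact key π hπirr (hπdvd.trans hdvd')
      (le_trans (Polynomial.natDegree_le_of_dvd hπdvd hg'0) hle')

end Helpers

section Mod7

/-- the reduction of `W` mod 7 (with representatives matching the signs of `W`) -/
noncomputable def f7 : (ZMod 7)[X] := 4 - (X : (ZMod 7)[X]) - (X : (ZMod 7)[X]) ^ 2 + 4 * (X : (ZMod 7)[X]) ^ 3 - 5 * (X : (ZMod 7)[X]) ^ 4 + 2 * (X : (ZMod 7)[X]) ^ 6 + (X : (ZMod 7)[X]) ^ 7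

lemma seven_eq_zero : (7 : (ZMod 7)[X]) = 0 := by
  rw [← map_ofNat (C : ZMod 7 →+* (ZMod 7)[X]) 7, show (7 : ZMod 7) = 0 from by decide, map_zero]

lemma f7_monic : f7.Monic := by unfold f7; monicity!

lemma f7_natDegree : f7.natDegree = 7 := by unfold f7; compute_degree!

lemma hX1 : ∃ u : (ZMod 7)[X], (X : (ZMod 7)[X]) ^ 1 = u * f7 + X := ⟨0, by ring⟩

lemma hX4 : ∃ u : (ZMod 7)[X], (X : (ZMod 7)[X]) ^ 4 = u * f7 + X ^ 4 := ⟨0, by ring⟩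

lemma hX8 : ∃ u : (ZMod 7)[X], (X : (ZMod 7)[X]) ^ 8 = u * f7 + (1 + X + 6 * X ^ 2 + 2 * X ^ 3 + 5 * X ^ 5 + 4 * X ^ 6) := by
  refine pow_step (by norm_num) hX4 hX4 (c := 5 + X) ?_
  unfold f7
  linear_combination (-3 - 3 * X ^ 3 + 3 * X ^ 4 - 2 * X ^ 6 - X ^ 7 : (ZMod 7)[X]) * seven_eq_zero

lemma hX16 : ∃ u : (ZMod 7)[X], (X : (ZMod 7)[X]) ^ 16 = u * f7 + (5 + X + X ^ 2 + 6 * X ^ 3 + 6 * X ^ 4 + 4 * X ^ 5 + 3 * X ^ 6) := by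
  refine pow_step (by norm_num) hX8 hX8 (c := 6 + X ^ 2 + 2 * X ^ 3 + X ^ 4 + 2 * X ^ 5) ?_
  unfold f7
  linear_combination (-4 + X + 2 * X ^ 2 - 3 * X ^ 3 + 9 * X ^ 4 + 3 * X ^ 5 + X ^ 6 + 10 * X ^ 7 + 9 * X ^ 8 + 3 * X ^ 9 + 3 * X ^ 10 + 5 * X ^ 11 + 2 * X ^ 12 : (ZMod 7)[X]) * seven_eq_zero

lemma hX32 : ∃ u : (ZMod 7)[X], (X : (ZMod 7)[X]) ^ 32 = u * f7 + (5 + X + 2 * X ^ 2 + X ^ 3 + 2 * X ^ 4 + 4 * X ^ 5 + X ^ 6) := by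
  refine pow_step (by norm_num) hX16 hX16 (c := 5 + 5 * X ^ 3 + 6 * X ^ 4 + 2 * X ^ 5) ?_
  unfold f7
  linear_combination (2 * X + 2 * X ^ 2 + 3 * X ^ 3 + 11 * X ^ 4 + 9 * X ^ 5 + 9 * X ^ 6 + 12 * X ^ 7 + 16 * X ^ 8 + 12 * X ^ 9 + 5 * X ^ 10 + 2 * X ^ 11 + X ^ 12 : (ZMod 7)[X]) * seven_eq_zero

lemma hX48 : ∃ u : (ZMod 7)[X], (X : (ZMod 7)[X]) ^ 48 = u * f7 + (1 + 3 * X + 6 * X ^ 3 + 4 * X ^ 4 + 2 * X ^ 5) := by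
  refine pow_step (by norm_num) hX32 hX16 (c := 6 + 5 * X + 5 * X ^ 2 + X ^ 3 + 3 * X ^ 4 + 3 * X ^ 5) ?_
  unfold f7
  linear_combination (-X + X ^ 2 + 2 * X ^ 3 + 7 * X ^ 4 + 8 * X ^ 5 + 9 * X ^ 6 + 2 * X ^ 7 + 5 * X ^ 8 + 7 * X ^ 9 + 3 * X ^ 10 + X ^ 11 : (ZMod 7)[X]) * seven_eq_zero

lemma hX49 : ∃ u : (ZMod 7)[X], (X : (ZMod 7)[X]) ^ 49 = u * f7 + (X + 3 * X ^ 2 + 6 * X ^ 4 + 4 * X ^ 5 + 2 * X ^ 6) := by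
  refine pow_step (by norm_num) hX48 hX1 (c := 0) ?_
  unfold f7
  linear_combination (0 : (ZMod 7)[X]) * seven_eq_zero

lemma hX98 : ∃ u : (ZMod 7)[X], (X : (ZMod 7)[X]) ^ 98 = u * f7 + (5 * X + 2 * X ^ 2 + 4 * X ^ 3 + 5 * X ^ 4 + 3 * X ^ 5 + 4 * X ^ 6) := by
  refine pow_step (by norm_num) hX49 hX49 (c := 4 * X + 6 * X ^ 2 + 3 * X ^ 3 + X ^ 4 + 4 * X ^ 5) ?_
  unfold f7
  linear_combination (-3 * X - 3 * X ^ 2 - X ^ 4 - X ^ 5 + 9 * X ^ 6 + 5 * X ^ 7 + 3 * X ^ 8 + 8 * X ^ 9 + 5 * X ^ 10 + X ^ 11 : (ZMod 7)[X]) * seven_eq_zero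

lemma hX196 : ∃ u : (ZMod 7)[X], (X : (ZMod 7)[X]) ^ 196 = u * f7 + (2 + 3 * X + X ^ 2 + 5 * X ^ 3 + 4 * X ^ 5 + X ^ 6) := by
  refine pow_step (by norm_num) hX98 hX98 (c := 3 + 5 * X ^ 2 + 2 * X ^ 3 + 6 * X ^ 4 + 2 * X ^ 5) ?_
  unfold f7
  linear_combination (-2 + X ^ 2 + 6 * X ^ 4 + 6 * X ^ 5 + 12 * X ^ 6 + 11 * X ^ 7 + 11 * X ^ 8 + 9 * X ^ 9 + 5 * X ^ 10 + 2 * X ^ 11 + 2 * X ^ 12 : (ZMod 7)[X]) * seven_eq_zero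

lemma hX294 : ∃ u : (ZMod 7)[X], (X : (ZMod 7)[X]) ^ 294 = u * f7 + (4 + 3 * X + 3 * X ^ 3 + 6 * X ^ 5) := by
  refine pow_step (by norm_num) hX196 hX98 (c := 6 + 5 * X + 4 * X ^ 2 + 2 * X ^ 3 + 4 * X ^ 4 + 4 * X ^ 5) ?_
  unfold f7
  linear_combination (-4 - X + 2 * X ^ 2 - X ^ 3 + 7 * X ^ 4 + 4 * X ^ 5 + 10 * X ^ 6 + 5 * X ^ 7 + 4 * X ^ 8 + 8 * X ^ 9 + X ^ 10 + X ^ 11 : (ZMod 7)[X]) * seven_eq_zero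

lemma hX343 : ∃ u : (ZMod 7)[X], (X : (ZMod 7)[X]) ^ 343 = u * f7 + (5 + 2 * X ^ 3 + 5 * X ^ 4 + 2 * X ^ 5 + 2 * X ^ 6) := by
  refine pow_step (by norm_num) hX294 hX49 (c := 4 + 2 * X + 5 * X ^ 4) ?_
  unfold f7
  linear_combination (-3 + 3 * X ^ 2 - X ^ 3 + 2 * X ^ 4 + 8 * X ^ 5 + 3 * X ^ 6 + 2 * X ^ 7 + 5 * X ^ 8 + 6 * X ^ 9 + 2 * X ^ 10 + X ^ 11 : (ZMod 7)[X]) * seven_eq_zero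

lemma coprime_49 : IsCoprime f7 ((X : (ZMod 7)[X]) ^ 49 - X) := by
  obtain ⟨u, hu⟩ := hX49
  refine ⟨(2 + 4 * X + 2 * X ^ 2 + 6 * X ^ 3 + 3 * X ^ 4 + 6 * X ^ 5) - (4 + 3 * X + 5 * X ^ 2 + 4 * X ^ 3 + 6 * X ^ 4 + 2 * X ^ 5 + 4 * X ^ 6) * u, 4 + 3 * X + 5 * X ^ 2 + 4 * X ^ 3 + 6 * X ^ 4 + 2 * X ^ 5 + 4 * X ^ 6, ?_⟩
  unfold f7 at hu ⊢
  linear_combination (4 + 3 * X + 5 * X ^ 2 + 4 * X ^ 3 + 6 * X ^ 4 + 2 * X ^ 5 + 4 * X ^ 6 : (ZMod 7)[X]) * hu + (1 + 2 * X + 2 * X ^ 2 + 5 * X ^ 3 + 7 * X ^ 4 + 7 * X ^ 5 + 11 * X ^ 6 + 6 * X ^ 7 + 13 * X ^ 8 + 4 * X ^ 9 + 8 * X ^ 10 + 5 * X ^ 11 + 2 * X ^ 12 : (ZMod 7)[X]) * seven_eq_zero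

lemma coprime_343 : IsCoprime f7 ((X : (ZMod 7)[X]) ^ 343 - X) := by
  obtain ⟨u, hu⟩ := hX343
  refine ⟨(1 + X ^ 2 + 6 * X ^ 3 + 5 * X ^ 4 + 4 * X ^ 5) - (5 + 4 * X + 3 * X ^ 2 + 3 * X ^ 3 + 5 * X ^ 4 + 6 * X ^ 5 + 5 * X ^ 6) * u, 5 + 4 * X + 3 * X ^ 2 + 3 * X ^ 3 + 5 * X ^ 4 + 6 * X ^ 5 + 5 * X ^ 6, ?_⟩
  unfold f7 at hu ⊢
  linear_combination (5 + 4 * X + 3 * X ^ 2 + 3 * X ^ 3 + 5 * X ^ 4 + 6 * X ^ 5 + 5 * X ^ 6 : (ZMod 7)[X]) * hu + (4 + 2 * X + 2 * X ^ 2 + 7 * X ^ 3 + 9 * X ^ 4 + 10 * X ^ 5 + 10 * X ^ 6 + 3 * X ^ 7 + 6 * X ^ 8 + 7 * X ^ 9 + 9 * X ^ 10 + 5 * X ^ 11 + 2 * X ^ 12 : (ZMod 7)[X]) * seven_eq_zero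

instance : Fact (Nat.Prime 7) := ⟨by norm_num⟩

set_option maxRecDepth 100000 in
lemma f7_irreducible : Irreducible f7 := by
  apply irreducible_of_coprime_card_pow f7_monic f7_natDegree
  · rw [ZMod.card, show (7 : ℕ) ^ 2 = 49 from by norm_num]
    exact coprime_49
  · rw [ZMod.card, show (7 : ℕ) ^ 3 = 343 from by norm_num]
    exact coprime_343

end Mod7

section Main

open NumberField Polynomial

noncomputable def Wz : ℤ[X] := 25080505128911932253708928 - 12424324733345159652928 * (X : ℤ[X]) - 3492108736160776544 * (X : ℤ[X]) ^ 2 + 2284807851123760 * (X : ℤ[X]) ^ 3 - 19774301384 * (X : ℤ[X]) ^ 4 - 86997036 * (X : ℤ[X]) ^ 5 + 2942 * (X : ℤ[X]) ^ 6 + (X : ℤ[X]) ^ 7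

noncomputable def Wq : ℚ[X] := 25080505128911932253708928 - 12424324733345159652928 * (X : ℚ[X]) - 3492108736160776544 * (X : ℚ[X]) ^ 2 + 2284807851123760 * (X : ℚ[X]) ^ 3 - 19774301384 * (X : ℚ[X]) ^ 4 - 86997036 * (X : ℚ[X]) ^ 5 + 2942 * (X : ℚ[X]) ^ 6 + (X : ℚ[X]) ^ 7

noncomputable def q7 : ℚ[X] := -2832 + 9964 * (X : ℚ[X]) - 12145 * (X : ℚ[X]) ^ 2 + 7034 * (X : ℚ[X]) ^ 3 - 2157 * (X : ℚ[X]) ^ 4 + 357 * (X : ℚ[X]) ^ 5 - 30 * (X : ℚ[X]) ^ 6 + (X : ℚ[X]) ^ 7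

lemma Wz_monic : Wz.Monic := by unfold Wz; monicity!

lemma Wq_monic : Wq.Monic := by unfold Wq; monicity!

lemma q7_monic : q7.Monic := by unfold q7; monicity!

lemma Wq_natDegree : Wq.natDegree = 7 := by unfold Wq; compute_degree!

lemma q7_natDegree : q7.natDegree = 7 := by unfold q7; compute_degree!

lemma Wq_coeff_zero : Wq.coeff 0 = 25080505128911932253708928 := by
  unfold Wq
  rw [Polynomial.coeff_zero_eq_eval_zero]
  simp

lemma q7_coeff_zero : q7.coeff 0 = -2832 := by
  unfold q7
  rw [Polynomial.coeff_zero_eq_eval_zero]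
  simp

lemma Wz_map_rat : Wz.map (Int.castRingHom ℚ) = Wq := by
  unfold Wz Wq
  simp only [Polynomial.map_add, Polynomial.map_sub, Polynomial.map_mul, Polynomial.map_pow,
    Polynomial.map_X, Polynomial.map_ofNat]

lemma Wz_map_zmod7 : Wz.map (Int.castRingHom (ZMod 7)) = f7 := by
  have h := seven_eq_zero
  unfold Wz f7
  simp only [Polynomial.map_add, Polynomial.map_sub, Polynomial.map_mul, Polynomial.map_pow,
    Polynomial.map_X, Polynomial.map_ofNat]
  linear_combination (3582929304130276036244132 - 1774903533335022807561 * (X : (ZMod 7)[X]) - 498872676594396649 * (X : (ZMod 7)[X]) ^ 2 + 326401121589108 * (X : (ZMod 7)[X]) ^ 3 - 2824900197 * (X : (ZMod 7)[X]) ^ 4 - 12428148 * (X : (ZMod 7)[X]) ^ 5 + 420 * (X : (ZMod 7)[X]) ^ 6) * h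

lemma Wq_irreducible : Irreducible Wq := by
  rw [← Wz_map_rat]
  exact (Polynomial.IsPrimitive.Int.irreducible_iff_irreducible_map_cast Wz_monic.isPrimitive).mp
    (Wz_monic.irreducible_of_irreducible_map (Int.castRingHom (ZMod 7)) Wz
      (by rw [Wz_map_zmod7]; exact f7_irreducible))

set_option maxHeartbeats 1000000 in
/-- Let `a ∈ 𝓞 K` be a root of
`q₇(x) = x⁷ − 30x⁶ + 357x⁵ − 2157x⁴ + 7034x³ − 12145x² + 9964x − 2832` generating
`K = ℚ(a)`, and let `w` be the explicitly given element of `K`.  Then `w` is an algebraic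
integer, `N_{K/ℚ}(w) = −2⁷ · 3 · 3919 · 1941571 · 8583739212883`, and the ideal `⟨3, w⟩`
of `𝓞 K` equals the prime ideal `⟨3, a⟩`, which has absolute norm `3`. -/
theorem stmt_13 (K : Type*) [Field K] [NumberField K] (a : 𝓞 K)
    (ha : a ^ 7 - 30 * a ^ 6 + 357 * a ^ 5 - 2157 * a ^ 4 + 7034 * a ^ 3 - 12145 * a ^ 2 +
      9964 * a - 2832 = 0)
    (hgen : Algebra.adjoin ℚ {algebraMap (𝓞 K) K a} = ⊤)
    (α : K) (hα : α = algebraMap (𝓞 K) K a)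
    (w : K)
    (hw : w = 134943/2 - 1626701/8 * α + 6689239/32 * α^2 - 2996715/32 * α^3 +
      80271/4 * α^4 - 64895/32 * α^5 + 2479/32 * α^6) :
    ∃ w0 : 𝓞 K, algebraMap (𝓞 K) K w0 = w ∧
      Algebra.norm ℚ w = -(2 ^ 7 * 3 * 3919 * 1941571 * 8583739212883 : ℚ) ∧
      Ideal.span {(3 : 𝓞 K), w0} = Ideal.span {(3 : 𝓞 K), a} ∧
      (Ideal.span {(3 : 𝓞 K), a}).IsPrime ∧
      Ideal.absNorm (Ideal.span {(3 : 𝓞 K), a}) = 3 := by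
  have relα : α ^ 7 - 30 * α ^ 6 + 357 * α ^ 5 - 2157 * α ^ 4 + 7034 * α ^ 3 - 12145 * α ^ 2 +
      9964 * α - 2832 = 0 := by
    have h := congrArg (algebraMap (𝓞 K) K) ha
    simp only [map_add, map_sub, map_mul, map_pow, map_ofNat, map_zero, ← hα] at h
    exact h
  have hWw : w ^ 7 + 2942 * w ^ 6 - 86997036 * w ^ 5 - 19774301384 * w ^ 4 +
      2284807851123760 * w ^ 3 - 3492108736160776544 * w ^ 2 - 12424324733345159652928 * w +
      25080505128911932253708928 = 0 := by
    rw [hw]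
    linear_combination (-(4716358213655873928977222796100795/2048) + (165646849817381851103090129656011381/4096) * α - (11006829103554167580344081253371176823/32768) * α ^ 2 + (115178348725862385132512813401684703791/65536) * α ^ 3 - (1706175057061932110595111018290356525255/262144) * α ^ 4 + (19057171524996501169334408887327107919567/1048576) * α ^ 5 - (333923054234662105908294633906040650603231/8388608) * α ^ 6 + (1178485103135519385088621042479126775835221/16777216) * α ^ 7 - (6831491250235989659230681673170758905619239/67108864) * α ^ 8 + (32991524446939531967519965154715389234042289/268435456) * α ^ 9 - (268398020233787138648733736158927526982709911/2147483648) * α ^ 10 + (463755793518387693797218299870902251838230945/4294967296) * α ^ 11 - (2741709774624339242003384271055925850850394987/34359738368) * α ^ 12 + (1742641013529268206421874379024601919966106643/34359738368) * α ^ 13 - (478435301745928594377781879518430640051003091/17179869184) * α ^ 14 + (14234233806704577480727048541408151476366109/1073741824) * α ^ 15 - (188491554190294960181541652399035689735215345/34359738368) * α ^ 16 + (67946183938136306788847088986131239544890235/34359738368) * α ^ 17 - (21365157225505127019949660803398241032281377/34359738368) * α ^ 18 + (5864570903459206069536816084232948944746031/34359738368) * α ^ 19 - (351341377852490116206321618931637533849281/8589934592)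 * α ^ 20 + (146914443024667706821800612902082934965011/17179869184) * α ^ 21 - (53523904832586729922935276525482869208981/34359738368) * α ^ 22 + (8475571902255933972823620680594911801585/34359738368) * α ^ 23 - (1162895507316196772275259612359484236589/34359738368) * α ^ 24 + (137632739538783253628463741685032104249/34359738368) * α ^ 25 - (6983847954067969280738948130611828131/17179869184) * α ^ 26 + (301493681655721486442243926526696597/8589934592) * α ^ 27 - (87672139226573888067267467549679155/34359738368) * α ^ 28 + (5292924941481059407704410972677085/34359738368) * α ^ 29 - (260420718660589820285200278688743/34359738368) * α ^ 30 + (10169732636451862035926123371717/34359738368) * α ^ 31 - (18942992034873648201922881187/2147483648) * α ^ 32 + (3236332809980314809135931779/17179869184) * α ^ 33 - (88170385214333966535862295/34359738368) * α ^ 34 + (575354729455070224778959/34359738368) * α ^ 35) * relα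
  have haevalWq : (Polynomial.aeval w) Wq = 0 := by
    unfold Wq
    simp only [map_add, map_sub, map_mul, map_pow, map_neg, map_ofNat, Polynomial.aeval_X]
    linear_combination hWw
  have haevalWz : (Polynomial.aeval w) Wz = 0 := by
    unfold Wz
    simp only [map_add, map_sub, map_mul, map_pow, map_neg, map_ofNat, Polynomial.aeval_X]
    linear_combination hWw
  have haevalq7 : (Polynomial.aeval α) q7 = 0 := by
    unfold q7
    simp only [map_add, map_sub, map_mul, map_pow, map_neg, map_ofNat, Polynomial.aeval_X]
    linear_combination relα
  have hminw : minpoly ℚ w = Wq := (minpoly.eq_of_irreducible_of_monic Wq_irreducible haevalWq Wq_monic).symm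
  have hintw : IsIntegral ℚ w := IsIntegral.of_finite ℚ w
  have hinta : IsIntegral ℚ α := IsIntegral.of_finite ℚ α
  have hAw : Module.finrank ℚ (Algebra.adjoin ℚ ({w} : Set K)) = 7 := by
    rw [(Algebra.adjoin.powerBasis hintw).finrank, Algebra.adjoin.powerBasis_dim, hminw,
      Wq_natDegree]
  have hgen' : Algebra.adjoin ℚ ({α} : Set K) = ⊤ := by rw [hα]; exact hgen
  let pbα : PowerBasis ℚ K := (Algebra.adjoin.powerBasis hinta).map
    ((Subalgebra.equivOfEq _ _ hgen').trans Subalgebra.topEquiv)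
  have hpbαgen : pbα.gen = α := rfl
  have hpbαdim : pbα.dim = (minpoly ℚ α).natDegree := rfl
  have hfinK : Module.finrank ℚ K = (minpoly ℚ α).natDegree := by
    rw [pbα.finrank, hpbαdim]
  have hdvdq7 : minpoly ℚ α ∣ q7 := minpoly.dvd ℚ α haevalq7
  have hle7 : (minpoly ℚ α).natDegree ≤ 7 := by
    have := Polynomial.natDegree_le_of_dvd hdvdq7 q7_monic.ne_zero
    rwa [q7_natDegree] at this
  have hge7 : 7 ≤ Module.finrank ℚ K := by
    rw [← hAw, ← Subalgebra.finrank_toSubmodule]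
    exact Submodule.finrank_le _
  have hfin7 : Module.finrank ℚ K = 7 := by omega
  have hminα : minpoly ℚ α = q7 := by
    apply monic_eq_of_dvd_deg (minpoly.monic hinta) q7_monic hdvdq7
    rw [q7_natDegree, ← hfinK, hfin7]
  have hNα : Algebra.norm ℚ α = 2832 := by
    have h := Algebra.PowerBasis.norm_gen_eq_coeff_zero_minpoly pbα
    have hdim : pbα.dim = 7 := by rw [hpbαdim, ← hfinK, hfin7]
    rw [hpbαgen, hdim, hminα, q7_coeff_zero] at h
    rw [h]; norm_num
  have hadjw : Algebra.adjoin ℚ ({w} : Set K) = ⊤ := by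
    rw [← Algebra.toSubmodule_eq_top]
    apply Submodule.eq_top_of_finrank_eq
    rw [Subalgebra.finrank_toSubmodule, hAw, hfin7]
  have hNw : Algebra.norm ℚ w = -(2 ^ 7 * 3 * 3919 * 1941571 * 8583739212883 : ℚ) := by
    let pbw : PowerBasis ℚ K := (Algebra.adjoin.powerBasis hintw).map
      ((Subalgebra.equivOfEq _ _ hadjw).trans Subalgebra.topEquiv)
    have hgenw : pbw.gen = w := rfl
    have hdimw : pbw.dim = 7 := by
      show (minpoly ℚ w).natDegree = 7
      rw [hminw, Wq_natDegree]
    have h := Algebra.PowerBasis.norm_gen_eq_coeff_zero_minpoly pbw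
    rw [hgenw, hdimw, hminw, Wq_coeff_zero] at h
    rw [h]; norm_num
  have hwint : IsIntegral ℤ w := ⟨Wz, Wz_monic, by rw [← Polynomial.aeval_def]; exact haevalWz⟩
  have hNa : Algebra.norm ℤ a = 2832 := by
    have h := Algebra.coe_norm_int a
    rw [NumberField.RingOfIntegers.coe_eq_algebraMap, ← hα, hNα] at h
    exact_mod_cast h
  set w0 : 𝓞 K := ⟨w, hwint⟩ with hw0def
  have hw0 : algebraMap (𝓞 K) K w0 = w := rfl
  have hw0mem : w0 ∈ Ideal.span {(3 : 𝓞 K), a} := by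
    rw [Ideal.mem_span_pair]
    refine ⟨1439392 - 21 * w0, 2 * (-6506804 + 6689239 * a - 2996715 * a ^ 2 + 642168 * a ^ 3 -
      64895 * a ^ 4 + 2479 * a ^ 5), ?_⟩
    apply NumberField.RingOfIntegers.coe_injective
    simp only [map_add, map_sub, map_mul, map_pow, map_ofNat, map_neg, hw0, ← hα,
      NumberField.RingOfIntegers.coe_eq_algebraMap]
    linear_combination (-64 : K) * hw
  have hamem : a ∈ Ideal.span {(3 : 𝓞 K), w0} := by
    rw [Ideal.mem_span_pair]
    refine ⟨-(2 * (2385332032 - 7973620144 * a + 8840634636 * a ^ 2 - 4405201372 * a ^ 3 + 1073449056 * a ^ 4 - 123116524 * a ^ 5 + 5254828 * a ^ 6)) - 21 * a,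
      64 * (2 + a + a ^ 2 + 2 * a ^ 3 + 2 * a ^ 5), ?_⟩
    apply NumberField.RingOfIntegers.coe_injective
    simp only [map_add, map_sub, map_mul, map_pow, map_ofNat, map_neg, map_one, hw0, ← hα,
      NumberField.RingOfIntegers.coe_eq_algebraMap]
    linear_combination (64 * (2 + α + α ^ 2 + 2 * α ^ 3 + 2 * α ^ 5) : K) * hw +
      (2 * (2525310 + 442155 * α + 87788 * α ^ 2 + 18950 * α ^ 3 + 4958 * α ^ 4) : K) * relα
  have hspan : Ideal.span {(3 : 𝓞 K), w0} = Ideal.span {(3 : 𝓞 K), a} := by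
    apply le_antisymm
    · rw [Ideal.span_le]
      intro x hx
      simp only [Set.mem_insert_iff, Set.mem_singleton_iff] at hx
      rcases hx with rfl | rfl
      · exact Ideal.subset_span (Set.mem_insert _ _)
      · exact hw0mem
    · rw [Ideal.span_le]
      intro x hx
      simp only [Set.mem_insert_iff, Set.mem_singleton_iff] at hx
      rcases hx with rfl | rfl
      · exact Ideal.subset_span (Set.mem_insert _ _)
      · exact hamem
  have h3mem : (3 : 𝓞 K) ∈ Ideal.span {(3 : 𝓞 K), a} := Ideal.subset_span (Set.mem_insert _ _)
  have haI : a ∈ Ideal.span {(3 : 𝓞 K), a} :=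
    Ideal.subset_span (Set.mem_insert_of_mem _ rfl)
  have hdvd2832 : Ideal.absNorm (Ideal.span {(3 : 𝓞 K), a}) ∣ 2832 := by
    have h := Ideal.absNorm_dvd_norm_of_mem haI
    rw [hNa] at h
    exact_mod_cast h
  have hdvd2187 : Ideal.absNorm (Ideal.span {(3 : 𝓞 K), a}) ∣ 2187 := by
    have h1 : Ideal.span {(3 : 𝓞 K)} ≤ Ideal.span {(3 : 𝓞 K), a} := by
      rw [Ideal.span_le, Set.singleton_subset_iff]
      exact h3mem
    have h2 := Ideal.absNorm_dvd_absNorm_of_le h1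
    rw [Ideal.absNorm_span_singleton] at h2
    have h3 : Algebra.norm ℤ (3 : 𝓞 K) = 3 ^ 7 := by
      classical
      let b := Module.Free.chooseBasis ℤ (𝓞 K)
      rw [← map_ofNat (algebraMap ℤ (𝓞 K)) 3, Algebra.norm_algebraMap_of_basis b,
        ← Module.finrank_eq_card_chooseBasisIndex, NumberField.RingOfIntegers.rank, hfin7]
    rw [h3] at h2
    simpa using h2
  have hne1 : Ideal.absNorm (Ideal.span {(3 : 𝓞 K), a}) ≠ 1 := by
    intro h1
    have htop : Ideal.span {(3 : 𝓞 K), a} = ⊤ := Ideal.absNorm_eq_one_iff.mp h1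
    have hone : (1 : 𝓞 K) ∈ Ideal.span {(3 : 𝓞 K), a} := htop ▸ Submodule.mem_top
    rw [Ideal.mem_span_pair] at hone
    obtain ⟨x, y, hxy⟩ := hone
    classical
    let b := Module.Free.chooseBasis ℤ (𝓞 K)
    have hx3 : x * 3 = (3 : ℤ) • x := by rw [zsmul_eq_mul]; push_cast; ring
    have hdet : Algebra.norm ℤ ((1 : 𝓞 K) - x * 3) =
        ((1 : Matrix _ _ ℤ) - (3 : ℤ) • (Algebra.leftMulMatrix b) x).det := by
      rw [Algebra.norm_eq_matrix_det b, hx3, map_sub, map_one, map_smul]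
    have hmat : ((1 : Matrix _ _ ℤ) - (3 : ℤ) • (Algebra.leftMulMatrix b) x).map
        (Int.castRingHom (ZMod 3)) = 1 := by
      have h3 : ((3 : ℤ) : ZMod 3) = 0 := by decide
      have h3' : (3 : ZMod 3) = 0 := by decide
      ext i j
      simp only [Matrix.map_apply, Matrix.sub_apply, Matrix.smul_apply, smul_eq_mul,
        Int.coe_castRingHom, Int.cast_sub, Int.cast_mul, Int.cast_ofNat, h3, h3', zero_mul,
        sub_zero]
      simp [Matrix.one_apply, apply_ite (fun t : ℤ => (t : ZMod 3))]
    have hmod : ((Algebra.norm ℤ ((1 : 𝓞 K) - x * 3) : ℤ) : ZMod 3) = 1 :=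
      calc ((Algebra.norm ℤ ((1 : 𝓞 K) - x * 3) : ℤ) : ZMod 3)
          = (Int.castRingHom (ZMod 3))
            (((1 : Matrix _ _ ℤ) - (3 : ℤ) • (Algebra.leftMulMatrix b) x).det) := by
              rw [hdet]; rfl
        _ = (((1 : Matrix _ _ ℤ) - (3 : ℤ) • (Algebra.leftMulMatrix b) x).map
            (Int.castRingHom (ZMod 3))).det := RingHom.map_det _ _
        _ = 1 := by rw [hmat, Matrix.det_one]
    have h13 : (1 : 𝓞 K) - x * 3 = y * a := by linear_combination -hxy
    rw [h13, map_mul, hNa] at hmod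
    rw [Int.cast_mul] at hmod
    have h2832 : ((2832 : ℤ) : ZMod 3) = 0 := by decide
    rw [h2832, mul_zero] at hmod
    exact absurd hmod (by decide)
  have habs : Ideal.absNorm (Ideal.span {(3 : 𝓞 K), a}) = 3 := by
    have hdvd3 : Ideal.absNorm (Ideal.span {(3 : 𝓞 K), a}) ∣ 3 := by
      have h := Nat.dvd_gcd hdvd2832 hdvd2187
      rwa [show Nat.gcd 2832 2187 = 3 from by norm_num] at h
    rcases (Nat.dvd_prime Nat.prime_three).mp hdvd3 with h | h
    · exact absurd h hne1
    · exact h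
  refine ⟨w0, hw0, hNw, hspan, ?_, habs⟩
  apply Ideal.isPrime_of_irreducible_absNorm
  rw [habs]
  exact (Nat.irreducible_iff_nat_prime 3).mpr Nat.prime_three

end Main
end

section
/- Let b be a root of q₅(x) = x⁵ − 27x⁴ + 261x³ − 1077x² + 1766x − 964, L = ℚ(b), and O_L the ring of integers of L. Set w = 35/4 − (435/8)b + (565/16)b² − (25/4)b³ + (5/16)b⁴ and v = 51/4 − (151/8)b + (129/16)b² − (5/4)b³ + (1/16)b⁴. Then w and v are algebraic integers (lie in O_L), the O_L-ideal ⟨2, v⟩ is a prime ideal lying over 2 of absolute norm 4, and the O_L-ideal ⟨8, w⟩ equals ⟨2, v⟩³; in particular ⟨8, w⟩ has absolute norm 64. -/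
open NumberField Polynomial

private lemma cases3 : ∀ z : ZMod 3, z = 0 ∨ z = 1 ∨ z = 2 := by decide

private lemma quad_form {F : Type*} [Field F] (g : F[X]) (hm : g.Monic) (hdeg : g.natDegree = 2) :
    ∃ a b : F, g = X ^ 2 + Polynomial.C a * X + Polynomial.C b := by
  have h1 : (g - X ^ 2).natDegree ≤ 1 := by
    refine Polynomial.natDegree_le_iff_coeff_eq_zero.mpr fun N hN => ?_
    rw [Polynomial.coeff_sub, Polynomial.coeff_X_pow]
    rcases eq_or_lt_of_le (show 2 ≤ N by omega) with h | h
    · have h2 := hm.coeff_natDegree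
      rw [hdeg] at h2
      rw [← h]
      simp [h2]
    · rw [Polynomial.coeff_eq_zero_of_natDegree_lt (by omega), if_neg (by omega)]
      ring
  obtain ⟨a, b, hab⟩ := Polynomial.exists_eq_X_add_C_of_natDegree_le_one h1
  exact ⟨a, b, by linear_combination hab⟩

private lemma irreducible_of_quintic {F : Type*} [Field F] (f : F[X]) (hm : f.Monic)
    (hdeg : f.natDegree = 5)
    (h12 : ∀ g : F[X], g.Monic → 1 ≤ g.natDegree → g.natDegree ≤ 2 → ¬ g ∣ f) :
    Irreducible f := by
  constructor
  · intro hu; have := Polynomial.natDegree_eq_zero_of_isUnit hu; omega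
  · intro a b hab
    by_contra hcon
    push_neg at hcon
    obtain ⟨ha, hb⟩ := hcon
    have hf0 : f ≠ 0 := hm.ne_zero
    have ha0 : a ≠ 0 := by rintro rfl; rw [zero_mul] at hab; exact hf0 hab
    have hb0 : b ≠ 0 := by rintro rfl; rw [mul_zero] at hab; exact hf0 hab
    have hsum : a.natDegree + b.natDegree = 5 := by
      rw [← Polynomial.natDegree_mul ha0 hb0, ← hab, hdeg]
    have hda : 1 ≤ a.natDegree := by
      by_contra hlt
      push_neg at hlt
      have h0 : a.natDegree = 0 := by omega
      have hC := Polynomial.eq_C_of_natDegree_eq_zero h0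
      apply ha
      rw [hC]
      refine Polynomial.isUnit_C.mpr (isUnit_iff_ne_zero.mpr fun hc => ha0 ?_)
      rw [hC, hc, Polynomial.C_0]
    have hdb : 1 ≤ b.natDegree := by
      by_contra hlt
      push_neg at hlt
      have h0 : b.natDegree = 0 := by omega
      have hC := Polynomial.eq_C_of_natDegree_eq_zero h0
      apply hb
      rw [hC]
      refine Polynomial.isUnit_C.mpr (isUnit_iff_ne_zero.mpr fun hc => hb0 ?_)
      rw [hC, hc, Polynomial.C_0]
    have key : ∀ p q : F[X], p ≠ 0 → f = p * q → 1 ≤ p.natDegree → p.natDegree ≤ 2 → False := by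
      intro p q hp0 hpq h1 h2
      have hlc : p.leadingCoeff ≠ 0 := Polynomial.leadingCoeff_ne_zero.mpr hp0
      have hmon := Polynomial.monic_mul_leadingCoeff_inv hp0
      have hnd : (p * Polynomial.C p.leadingCoeff⁻¹).natDegree = p.natDegree :=
        Polynomial.natDegree_mul_C (inv_ne_zero hlc)
      refine h12 _ hmon (by omega) (by omega) ?_
      have hCC : Polynomial.C p.leadingCoeff⁻¹ * Polynomial.C p.leadingCoeff = 1 := by
        rw [← Polynomial.C_mul, inv_mul_cancel₀ hlc, Polynomial.C_1]
      exact ⟨Polynomial.C p.leadingCoeff * q, by linear_combination hpq - (p * q) * hCC⟩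
    rcases le_or_gt a.natDegree 2 with h | h
    · exact key a b ha0 hab hda h
    · exact key b a hb0 (by rw [hab, mul_comm]) hdb (by omega)

private lemma h3zmod : (3 : (ZMod 3)[X]) = 0 := by
  have : ((3 : ZMod 3)) = 0 := by decide
  rw [← map_ofNat (Polynomial.C (R := ZMod 3)) 3, this, map_zero]

set_option maxHeartbeats 2000000 in
private lemma irred3 : Irreducible (X ^ 5 + 2 * X ^ 4 + X + 1 : (ZMod 3)[X]) := by
  have h3 := h3zmod
  refine irreducible_of_quintic _ (by monicity!) (by compute_degree!) ?_
  intro g hg hd1 hd2 hdvd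
  have hd : g.natDegree = 1 ∨ g.natDegree = 2 := by omega
  rcases hd with hnd | hnd
  · have hab := hg.eq_X_add_C hnd
    obtain h0 | h0 | h0 := cases3 (g.coeff 0)
    · -- c=0
      rw [h0] at hab
      rw [hab] at hdvd
      simp only [map_zero, map_one, map_ofNat, zero_mul, one_mul, add_zero] at hdvd
      have hgq : (X ^ 5 + 2 * X ^ 4 + X + 1 : (ZMod 3)[X]) - (X) * (X ^ 4 + 2 * X ^ 3 + 1) = (1) := by
        linear_combination (0 : (ZMod 3)[X]) * h3
      have hdr : ((X) : (ZMod 3)[X]) ∣ (1) := by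
        have h5 := dvd_sub hdvd (dvd_mul_right _ (X ^ 4 + 2 * X ^ 3 + 1))
        rwa [hgq] at h5
      have hrne : (1) ≠ (0 : (ZMod 3)[X]) := by
        intro h0x
        have h6 := congrArg (Polynomial.eval (0 : ZMod 3)) h0x
        simp only [Polynomial.eval_add, Polynomial.eval_mul, Polynomial.eval_pow,
          Polynomial.eval_ofNat, Polynomial.eval_one, Polynomial.eval_X, Polynomial.eval_zero] at h6
        exact absurd h6 (by decide)
      have hle := Polynomial.natDegree_le_of_dvd hdr hrne
      have hgd : ((X) : (ZMod 3)[X]).natDegree = 1 := by compute_degree!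
      have hrd : ((1) : (ZMod 3)[X]).natDegree <= 0 := by compute_degree <;> omega
      omega
    · -- c=1
      rw [h0] at hab
      rw [hab] at hdvd
      simp only [map_zero, map_one, map_ofNat, zero_mul, one_mul, add_zero] at hdvd
      have hgq : (X ^ 5 + 2 * X ^ 4 + X + 1 : (ZMod 3)[X]) - (X + 1) * (X ^ 4 + X ^ 3 + 2 * X ^ 2 + X) = (1) := by
        linear_combination (-1 * X ^ 3 + -1 * X ^ 2) * h3
      have hdr : ((X + 1) : (ZMod 3)[X]) ∣ (1) := by
        have h5 := dvd_sub hdvd (dvd_mul_right _ (X ^ 4 + X ^ 3 + 2 * X ^ 2 + X))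
        rwa [hgq] at h5
      have hrne : (1) ≠ (0 : (ZMod 3)[X]) := by
        intro h0x
        have h6 := congrArg (Polynomial.eval (0 : ZMod 3)) h0x
        simp only [Polynomial.eval_add, Polynomial.eval_mul, Polynomial.eval_pow,
          Polynomial.eval_ofNat, Polynomial.eval_one, Polynomial.eval_X, Polynomial.eval_zero] at h6
        exact absurd h6 (by decide)
      have hle := Polynomial.natDegree_le_of_dvd hdr hrne
      have hgd : ((X + 1) : (ZMod 3)[X]).natDegree = 1 := by compute_degree!
      have hrd : ((1) : (ZMod 3)[X]).natDegree <= 0 := by compute_degree <;> omega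
      omega
    · -- c=2
      rw [h0] at hab
      rw [hab] at hdvd
      simp only [map_zero, map_one, map_ofNat, zero_mul, one_mul, add_zero] at hdvd
      have hgq : (X ^ 5 + 2 * X ^ 4 + X + 1 : (ZMod 3)[X]) - (X + 2) * (X ^ 4 + 1) = (2) := by
        linear_combination ((-1 : (ZMod 3)[X])) * h3
      have hdr : ((X + 2) : (ZMod 3)[X]) ∣ (2) := by
        have h5 := dvd_sub hdvd (dvd_mul_right _ (X ^ 4 + 1))
        rwa [hgq] at h5
      have hrne : (2) ≠ (0 : (ZMod 3)[X]) := by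
        intro h0x
        have h6 := congrArg (Polynomial.eval (0 : ZMod 3)) h0x
        simp only [Polynomial.eval_add, Polynomial.eval_mul, Polynomial.eval_pow,
          Polynomial.eval_ofNat, Polynomial.eval_one, Polynomial.eval_X, Polynomial.eval_zero] at h6
        exact absurd h6 (by decide)
      have hle := Polynomial.natDegree_le_of_dvd hdr hrne
      have hgd : ((X + 2) : (ZMod 3)[X]).natDegree = 1 := by compute_degree!
      have hrd : ((2) : (ZMod 3)[X]).natDegree <= 0 := by compute_degree <;> omega
      omega
  · obtain ⟨a, b, hab⟩ := quad_form g hg hnd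
    obtain h1 | h1 | h1 := cases3 a <;> obtain h0 | h0 | h0 := cases3 b
    · -- b1=0, b0=0
      rw [h1, h0] at hab
      rw [hab] at hdvd
      simp only [map_zero, map_one, map_ofNat, zero_mul, one_mul, add_zero] at hdvd
      have hgq : (X ^ 5 + 2 * X ^ 4 + X + 1 : (ZMod 3)[X]) - (X ^ 2) * (X ^ 3 + 2 * X ^ 2) = (X + 1) := by
        linear_combination (0 : (ZMod 3)[X]) * h3
      have hdr : ((X ^ 2) : (ZMod 3)[X]) ∣ (X + 1) := by
        have h5 := dvd_sub hdvd (dvd_mul_right _ (X ^ 3 + 2 * X ^ 2))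
        rwa [hgq] at h5
      have hrne : (X + 1) ≠ (0 : (ZMod 3)[X]) := by
        intro h0x
        have h6 := congrArg (Polynomial.eval (0 : ZMod 3)) h0x
        simp only [Polynomial.eval_add, Polynomial.eval_mul, Polynomial.eval_pow,
          Polynomial.eval_ofNat, Polynomial.eval_one, Polynomial.eval_X, Polynomial.eval_zero] at h6
        exact absurd h6 (by decide)
      have hle := Polynomial.natDegree_le_of_dvd hdr hrne
      have hgd : ((X ^ 2) : (ZMod 3)[X]).natDegree = 2 := by compute_degree!
      have hrd : ((X + 1) : (ZMod 3)[X]).natDegree <= 1 := by compute_degree <;> omega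
      omega
    · -- b1=0, b0=1
      rw [h1, h0] at hab
      rw [hab] at hdvd
      simp only [map_zero, map_one, map_ofNat, zero_mul, one_mul, add_zero] at hdvd
      have hgq : (X ^ 5 + 2 * X ^ 4 + X + 1 : (ZMod 3)[X]) - (X ^ 2 + 1) * (X ^ 3 + 2 * X ^ 2 + 2 * X + 1) = (2 * X) := by
        linear_combination (-1 * X ^ 3 + -1 * X ^ 2 + -1 * X) * h3
      have hdr : ((X ^ 2 + 1) : (ZMod 3)[X]) ∣ (2 * X) := by
        have h5 := dvd_sub hdvd (dvd_mul_right _ (X ^ 3 + 2 * X ^ 2 + 2 * X + 1))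
        rwa [hgq] at h5
      have hrne : (2 * X) ≠ (0 : (ZMod 3)[X]) := by
        intro h0x
        have h6 := congrArg (Polynomial.eval (1 : ZMod 3)) h0x
        simp only [Polynomial.eval_add, Polynomial.eval_mul, Polynomial.eval_pow,
          Polynomial.eval_ofNat, Polynomial.eval_one, Polynomial.eval_X, Polynomial.eval_zero] at h6
        exact absurd h6 (by decide)
      have hle := Polynomial.natDegree_le_of_dvd hdr hrne
      have hgd : ((X ^ 2 + 1) : (ZMod 3)[X]).natDegree = 2 := by compute_degree!
      have hrd : ((2 * X) : (ZMod 3)[X]).natDegree <= 1 := by compute_degree <;> omega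
      omega
    · -- b1=0, b0=2
      rw [h1, h0] at hab
      rw [hab] at hdvd
      simp only [map_zero, map_one, map_ofNat, zero_mul, one_mul, add_zero] at hdvd
      have hgq : (X ^ 5 + 2 * X ^ 4 + X + 1 : (ZMod 3)[X]) - (X ^ 2 + 2) * (X ^ 3 + 2 * X ^ 2 + X + 2) = (2 * X) := by
        linear_combination (-1 * X ^ 3 + -2 * X ^ 2 + -1 * X + (-1 : (ZMod 3)[X])) * h3
      have hdr : ((X ^ 2 + 2) : (ZMod 3)[X]) ∣ (2 * X) := by
        have h5 := dvd_sub hdvd (dvd_mul_right _ (X ^ 3 + 2 * X ^ 2 + X + 2))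
        rwa [hgq] at h5
      have hrne : (2 * X) ≠ (0 : (ZMod 3)[X]) := by
        intro h0x
        have h6 := congrArg (Polynomial.eval (1 : ZMod 3)) h0x
        simp only [Polynomial.eval_add, Polynomial.eval_mul, Polynomial.eval_pow,
          Polynomial.eval_ofNat, Polynomial.eval_one, Polynomial.eval_X, Polynomial.eval_zero] at h6
        exact absurd h6 (by decide)
      have hle := Polynomial.natDegree_le_of_dvd hdr hrne
      have hgd : ((X ^ 2 + 2) : (ZMod 3)[X]).natDegree = 2 := by compute_degree!
      have hrd : ((2 * X) : (ZMod 3)[X]).natDegree <= 1 := by compute_degree <;> omega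
      omega
    · -- b1=1, b0=0
      rw [h1, h0] at hab
      rw [hab] at hdvd
      simp only [map_zero, map_one, map_ofNat, zero_mul, one_mul, add_zero] at hdvd
      have hgq : (X ^ 5 + 2 * X ^ 4 + X + 1 : (ZMod 3)[X]) - (X ^ 2 + X) * (X ^ 3 + X ^ 2 + 2 * X + 1) = (1) := by
        linear_combination (-1 * X ^ 3 + -1 * X ^ 2) * h3
      have hdr : ((X ^ 2 + X) : (ZMod 3)[X]) ∣ (1) := by
        have h5 := dvd_sub hdvd (dvd_mul_right _ (X ^ 3 + X ^ 2 + 2 * X + 1))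
        rwa [hgq] at h5
      have hrne : (1) ≠ (0 : (ZMod 3)[X]) := by
        intro h0x
        have h6 := congrArg (Polynomial.eval (0 : ZMod 3)) h0x
        simp only [Polynomial.eval_add, Polynomial.eval_mul, Polynomial.eval_pow,
          Polynomial.eval_ofNat, Polynomial.eval_one, Polynomial.eval_X, Polynomial.eval_zero] at h6
        exact absurd h6 (by decide)
      have hle := Polynomial.natDegree_le_of_dvd hdr hrne
      have hgd : ((X ^ 2 + X) : (ZMod 3)[X]).natDegree = 2 := by compute_degree!
      have hrd : ((1) : (ZMod 3)[X]).natDegree <= 1 := by compute_degree <;> omega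
      omega
    · -- b1=1, b0=1
      rw [h1, h0] at hab
      rw [hab] at hdvd
      simp only [map_zero, map_one, map_ofNat, zero_mul, one_mul, add_zero] at hdvd
      have hgq : (X ^ 5 + 2 * X ^ 4 + X + 1 : (ZMod 3)[X]) - (X ^ 2 + X + 1) * (X ^ 3 + X ^ 2 + X + 1) = (2 * X) := by
        linear_combination (-1 * X ^ 3 + -1 * X ^ 2 + -1 * X) * h3
      have hdr : ((X ^ 2 + X + 1) : (ZMod 3)[X]) ∣ (2 * X) := by
        have h5 := dvd_sub hdvd (dvd_mul_right _ (X ^ 3 + X ^ 2 + X + 1))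
        rwa [hgq] at h5
      have hrne : (2 * X) ≠ (0 : (ZMod 3)[X]) := by
        intro h0x
        have h6 := congrArg (Polynomial.eval (1 : ZMod 3)) h0x
        simp only [Polynomial.eval_add, Polynomial.eval_mul, Polynomial.eval_pow,
          Polynomial.eval_ofNat, Polynomial.eval_one, Polynomial.eval_X, Polynomial.eval_zero] at h6
        exact absurd h6 (by decide)
      have hle := Polynomial.natDegree_le_of_dvd hdr hrne
      have hgd : ((X ^ 2 + X + 1) : (ZMod 3)[X]).natDegree = 2 := by compute_degree!
      have hrd : ((2 * X) : (ZMod 3)[X]).natDegree <= 1 := by compute_degree <;> omega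
      omega
    · -- b1=1, b0=2
      rw [h1, h0] at hab
      rw [hab] at hdvd
      simp only [map_zero, map_one, map_ofNat, zero_mul, one_mul, add_zero] at hdvd
      have hgq : (X ^ 5 + 2 * X ^ 4 + X + 1 : (ZMod 3)[X]) - (X ^ 2 + X + 2) * (X ^ 3 + X ^ 2 + 1) = (2) := by
        linear_combination (-1 * X ^ 3 + -1 * X ^ 2 + (-1 : (ZMod 3)[X])) * h3
      have hdr : ((X ^ 2 + X + 2) : (ZMod 3)[X]) ∣ (2) := by
        have h5 := dvd_sub hdvd (dvd_mul_right _ (X ^ 3 + X ^ 2 + 1))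
        rwa [hgq] at h5
      have hrne : (2) ≠ (0 : (ZMod 3)[X]) := by
        intro h0x
        have h6 := congrArg (Polynomial.eval (0 : ZMod 3)) h0x
        simp only [Polynomial.eval_add, Polynomial.eval_mul, Polynomial.eval_pow,
          Polynomial.eval_ofNat, Polynomial.eval_one, Polynomial.eval_X, Polynomial.eval_zero] at h6
        exact absurd h6 (by decide)
      have hle := Polynomial.natDegree_le_of_dvd hdr hrne
      have hgd : ((X ^ 2 + X + 2) : (ZMod 3)[X]).natDegree = 2 := by compute_degree!
      have hrd : ((2) : (ZMod 3)[X]).natDegree <= 1 := by compute_degree <;> omega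
      omega
    · -- b1=2, b0=0
      rw [h1, h0] at hab
      rw [hab] at hdvd
      simp only [map_zero, map_one, map_ofNat, zero_mul, one_mul, add_zero] at hdvd
      have hgq : (X ^ 5 + 2 * X ^ 4 + X + 1 : (ZMod 3)[X]) - (X ^ 2 + 2 * X) * (X ^ 3) = (X + 1) := by
        linear_combination (0 : (ZMod 3)[X]) * h3
      have hdr : ((X ^ 2 + 2 * X) : (ZMod 3)[X]) ∣ (X + 1) := by
        have h5 := dvd_sub hdvd (dvd_mul_right _ (X ^ 3))
        rwa [hgq] at h5
      have hrne : (X + 1) ≠ (0 : (ZMod 3)[X]) := by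
        intro h0x
        have h6 := congrArg (Polynomial.eval (0 : ZMod 3)) h0x
        simp only [Polynomial.eval_add, Polynomial.eval_mul, Polynomial.eval_pow,
          Polynomial.eval_ofNat, Polynomial.eval_one, Polynomial.eval_X, Polynomial.eval_zero] at h6
        exact absurd h6 (by decide)
      have hle := Polynomial.natDegree_le_of_dvd hdr hrne
      have hgd : ((X ^ 2 + 2 * X) : (ZMod 3)[X]).natDegree = 2 := by compute_degree!
      have hrd : ((X + 1) : (ZMod 3)[X]).natDegree <= 1 := by compute_degree <;> omega
      omega
    · -- b1=2, b0=1
      rw [h1, h0] at hab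
      rw [hab] at hdvd
      simp only [map_zero, map_one, map_ofNat, zero_mul, one_mul, add_zero] at hdvd
      have hgq : (X ^ 5 + 2 * X ^ 4 + X + 1 : (ZMod 3)[X]) - (X ^ 2 + 2 * X + 1) * (X ^ 3 + 2 * X + 2) = (X + 2) := by
        linear_combination (-1 * X ^ 3 + -2 * X ^ 2 + -2 * X + (-1 : (ZMod 3)[X])) * h3
      have hdr : ((X ^ 2 + 2 * X + 1) : (ZMod 3)[X]) ∣ (X + 2) := by
        have h5 := dvd_sub hdvd (dvd_mul_right _ (X ^ 3 + 2 * X + 2))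
        rwa [hgq] at h5
      have hrne : (X + 2) ≠ (0 : (ZMod 3)[X]) := by
        intro h0x
        have h6 := congrArg (Polynomial.eval (0 : ZMod 3)) h0x
        simp only [Polynomial.eval_add, Polynomial.eval_mul, Polynomial.eval_pow,
          Polynomial.eval_ofNat, Polynomial.eval_one, Polynomial.eval_X, Polynomial.eval_zero] at h6
        exact absurd h6 (by decide)
      have hle := Polynomial.natDegree_le_of_dvd hdr hrne
      have hgd : ((X ^ 2 + 2 * X + 1) : (ZMod 3)[X]).natDegree = 2 := by compute_degree!
      have hrd : ((X + 2) : (ZMod 3)[X]).natDegree <= 1 := by compute_degree <;> omega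
      omega
    · -- b1=2, b0=2
      rw [h1, h0] at hab
      rw [hab] at hdvd
      simp only [map_zero, map_one, map_ofNat, zero_mul, one_mul, add_zero] at hdvd
      have hgq : (X ^ 5 + 2 * X ^ 4 + X + 1 : (ZMod 3)[X]) - (X ^ 2 + 2 * X + 2) * (X ^ 3 + X + 1) = (2) := by
        linear_combination (-1 * X ^ 3 + -1 * X ^ 2 + -1 * X + (-1 : (ZMod 3)[X])) * h3
      have hdr : ((X ^ 2 + 2 * X + 2) : (ZMod 3)[X]) ∣ (2) := by
        have h5 := dvd_sub hdvd (dvd_mul_right _ (X ^ 3 + X + 1))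
        rwa [hgq] at h5
      have hrne : (2) ≠ (0 : (ZMod 3)[X]) := by
        intro h0x
        have h6 := congrArg (Polynomial.eval (0 : ZMod 3)) h0x
        simp only [Polynomial.eval_add, Polynomial.eval_mul, Polynomial.eval_pow,
          Polynomial.eval_ofNat, Polynomial.eval_one, Polynomial.eval_X, Polynomial.eval_zero] at h6
        exact absurd h6 (by decide)
      have hle := Polynomial.natDegree_le_of_dvd hdr hrne
      have hgd : ((X ^ 2 + 2 * X + 2) : (ZMod 3)[X]).natDegree = 2 := by compute_degree!
      have hrd : ((2) : (ZMod 3)[X]).natDegree <= 1 := by compute_degree <;> omega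
      omega

set_option maxHeartbeats 1000000 in
private lemma isField_of_card_four {R : Type*} [CommRing R] (h2 : (2 : R) = 0)
    (hcard : Nat.card R = 4) (u : R) (hu : u ^ 2 + u + 1 = 0) : IsField R := by
  have hfin : Finite R := Nat.finite_of_card_ne_zero (by omega)
  have h01 : (0 : R) ≠ 1 := by
    intro h
    have hs : Subsingleton R := subsingleton_of_zero_eq_one h
    have : Nat.card R = 1 := Nat.card_eq_one_iff_unique.mpr ⟨hs, ⟨0⟩⟩
    omega
  have hu0 : u ≠ 0 := by rintro rfl; exact h01 (by linear_combination -hu)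
  have hu1 : u ≠ 1 := by rintro rfl; exact h01 (by linear_combination hu - 2 * h2)
  set f : Bool × Bool → R := fun p => (cond p.1 (1:R) 0) + (cond p.2 u 0) with hf
  have hinj : Function.Injective f := by
    rintro ⟨a1, a2⟩ ⟨b1, b2⟩ h
    simp only [hf, cond_true, cond_false] at h
    cases a1 <;> cases a2 <;> cases b1 <;> cases b2 <;> simp only [cond_true, cond_false] at h <;>
      first
      | rfl
      | (exfalso
         first
         | exact h01 (by linear_combination h)
         | exact h01 (by linear_combination -h)
         | exact hu0 (by linear_combination h)
         | exact hu0 (by linear_combination -h)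
         | exact hu1 (by linear_combination h)
         | exact hu1 (by linear_combination -h)
         | exact hu1 (by linear_combination h - h2)
         | exact hu1 (by linear_combination -h + h2)
         | exact hu1 (by linear_combination h + h2)
         | exact hu1 (by linear_combination -h - h2)
         | exact h01 (by linear_combination h - h2)
         | exact h01 (by linear_combination -h + h2)
         | exact h01 (by linear_combination h + h2)
         | exact h01 (by linear_combination -h - h2)
         | exact hu0 (by linear_combination h - h2)
         | exact hu0 (by linear_combination -h + h2)
         | exact hu0 (by linear_combination h + h2)
         | exact hu0 (by linear_combination -h - h2))
  have hcard' : Nat.card (Bool × Bool) = Nat.card R := by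
    simp only [Nat.card_eq_fintype_card, Fintype.card_prod, Fintype.card_bool, hcard]
  have hbij : Function.Bijective f := (Nat.bijective_iff_injective_and_card f).mpr ⟨hinj, hcard'⟩
  refine ⟨⟨0, 1, h01⟩, mul_comm, ?_⟩
  intro z hz
  obtain ⟨⟨p1, p2⟩, rfl⟩ := hbij.2 z
  cases p1 <;> cases p2 <;> simp only [hf, cond_true, cond_false] at hz ⊢
  · exact absurd (by ring) hz
  · exact ⟨1 + u, by linear_combination hu - h2⟩
  · exact ⟨1, by ring⟩
  · exact ⟨u, by linear_combination hu - h2⟩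

set_option maxHeartbeats 8000000 in
set_option synthInstance.maxHeartbeats 1000000 in
/-- Let `b ∈ 𝓞 L` be a root of
`q₅(x) = x⁵ − 27x⁴ + 261x³ − 1077x² + 1766x − 964` generating `L = ℚ(b)`, and let
`w, v ∈ L` be the explicitly given elements.  Then `w` and `v` are algebraic integers, the
ideal `⟨2, v⟩` of `𝓞 L` is a prime ideal lying over `2` of absolute norm `4`, and
`⟨8, w⟩ = ⟨2, v⟩³`; in particular `⟨8, w⟩` has absolute norm `64`. -/
theorem stmt_18 (L : Type*) [Field L] [NumberField L] (b : 𝓞 L)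
    (hb : b ^ 5 - 27 * b ^ 4 + 261 * b ^ 3 - 1077 * b ^ 2 + 1766 * b - 964 = 0)
    (hgen : Algebra.adjoin ℚ {algebraMap (𝓞 L) L b} = ⊤)
    (β : L) (hβ : β = algebraMap (𝓞 L) L b)
    (w v : L)
    (hw : w = 35/4 - 435/8 * β + 565/16 * β^2 - 25/4 * β^3 + 5/16 * β^4)
    (hv : v = 51/4 - 151/8 * β + 129/16 * β^2 - 5/4 * β^3 + 1/16 * β^4) :
    ∃ w0 v0 : 𝓞 L, algebraMap (𝓞 L) L w0 = w ∧ algebraMap (𝓞 L) L v0 = v ∧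
      (Ideal.span {(2 : 𝓞 L), v0}).IsPrime ∧ (2 : 𝓞 L) ∈ Ideal.span {(2 : 𝓞 L), v0} ∧
      Ideal.absNorm (Ideal.span {(2 : 𝓞 L), v0}) = 4 ∧
      Ideal.span {(8 : 𝓞 L), w0} = (Ideal.span {(2 : 𝓞 L), v0}) ^ 3 ∧
      Ideal.absNorm (Ideal.span {(8 : 𝓞 L), w0}) = 64 := by
  have hq : β ^ 5 - 27 * β ^ 4 + 261 * β ^ 3 - 1077 * β ^ 2 + 1766 * β - 964 = 0 := by
    have h0 := congrArg (algebraMap (𝓞 L) L) hb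
    simp only [map_sub, map_add, map_mul, map_pow, map_ofNat, map_zero] at h0
    rw [← hβ] at h0
    exact h0
  rw [← hβ] at hgen
  have haev_v : (Polynomial.aeval (51/4 - 151/8 * β + 129/16 * β^2 - 5/4 * β^3 + 1/16 * β^4 : L)) (X ^ 5 + 2 * X ^ 4 - 36 * X ^ 3 - 31 * X ^ 2 + 56 * X + 16 : ℤ[X]) = 0 := by
    simp only [map_add, map_sub, map_mul, map_pow, map_ofNat, Polynomial.aeval_X, map_one]
    linear_combination ((-1320859/4096 : L) + (8040065/4096 : L) * β + (-40920203/8192 : L) * β ^ 2 + (29710061/4096 : L) * β ^ 3 + (-449126041/65536 : L) * β ^ 4 + (295627591/65536 : L) * β ^ 5 + (-281634537/131072 : L) * β ^ 6 + (99133023/131072 : L) * β ^ 7 + (-208340567/1048576 : L) * β ^ 8 + (40907295/1048576 : L) * β ^ 9 + (-5962995/1048576 : L) * β ^ 10 + (634699/1048576 : L) * β ^ 11 + (-47829/1048576 : L) * β ^ 12 + (2413/1048576 : L) * β ^ 13 + (-73/1048576 : L) * β ^ 14 + (1/1048576 : L) * β ^ 15) * hq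
  have hint_v : IsIntegral ℤ (51/4 - 151/8 * β + 129/16 * β^2 - 5/4 * β^3 + 1/16 * β^4 : L) := ⟨(X ^ 5 + 2 * X ^ 4 - 36 * X ^ 3 - 31 * X ^ 2 + 56 * X + 16 : ℤ[X]), by monicity!, by rw [← Polynomial.aeval_def]; exact haev_v⟩
  obtain ⟨v0, hv0⟩ : ∃ z : 𝓞 L, (algebraMap (𝓞 L) L) z = (51/4 - 151/8 * β + 129/16 * β^2 - 5/4 * β^3 + 1/16 * β^4 : L) := ⟨⟨_, hint_v⟩, rfl⟩
  have haev_w : (Polynomial.aeval (35/4 - 435/8 * β + 565/16 * β^2 - 25/4 * β^3 + 5/16 * β^4 : L)) (X ^ 5 + 240 * X ^ 4 + 15500 * X ^ 3 + 132875 * X ^ 2 - 2500000 * X - 25400000 : ℤ[X]) = 0 := by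
    simp only [map_add, map_sub, map_mul, map_pow, map_ofNat, Polynomial.aeval_X, map_one]
    linear_combination ((107328125/4096 : L) + (1134146875/4096 : L) * β + (-13801896875/8192 : L) * β ^ 2 + (27583709375/8192 : L) * β ^ 3 + (-247475253125/65536 : L) * β ^ 4 + (195342178125/65536 : L) * β ^ 5 + (-227882121875/131072 : L) * β ^ 6 + (100735353125/131072 : L) * β ^ 7 + (-272781921875/1048576 : L) * β ^ 8 + (68884646875/1048576 : L) * β ^ 9 + (-12502009375/1048576 : L) * β ^ 10 + (1578984375/1048576 : L) * β ^ 11 + (-134215625/1048576 : L) * β ^ 12 + (7290625/1048576 : L) * β ^ 13 + (-228125/1048576 : L) * β ^ 14 + (3125/1048576 : L) * β ^ 15) * hq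
  have hint_w : IsIntegral ℤ (35/4 - 435/8 * β + 565/16 * β^2 - 25/4 * β^3 + 5/16 * β^4 : L) := ⟨(X ^ 5 + 240 * X ^ 4 + 15500 * X ^ 3 + 132875 * X ^ 2 - 2500000 * X - 25400000 : ℤ[X]), by monicity!, by rw [← Polynomial.aeval_def]; exact haev_w⟩
  obtain ⟨w0, hw0⟩ : ∃ z : 𝓞 L, (algebraMap (𝓞 L) L) z = (35/4 - 435/8 * β + 565/16 * β^2 - 25/4 * β^3 + 5/16 * β^4 : L) := ⟨⟨_, hint_w⟩, rfl⟩
  have haev_pi : (Polynomial.aeval ((17 : L) + (-16 : L) * β + (15/4 : L) * β ^ 2 + (-1/4 : L) * β ^ 3)) (X ^ 5 + 14 * X ^ 4 - 72 * X ^ 3 + 51 * X ^ 2 + 46 * X + 4 : ℤ[X]) = 0 := by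
    simp only [map_add, map_sub, map_mul, map_pow, map_ofNat, Polynomial.aeval_X, map_one]
    linear_combination ((-2335 : L) + (12427/2 : L) * β + (-111991/16 : L) * β ^ 2 + (143129/32 : L) * β ^ 3 + (-117059/64 : L) * β ^ 4 + (1009/2 : L) * β ^ 5 + (-24365/256 : L) * β ^ 6 + (6195/512 : L) * β ^ 7 + (-1013/1024 : L) * β ^ 8 + (3/64 : L) * β ^ 9 + (-1/1024 : L) * β ^ 10) * hq
  have hint_pi : IsIntegral ℤ ((17 : L) + (-16 : L) * β + (15/4 : L) * β ^ 2 + (-1/4 : L) * β ^ 3) := ⟨(X ^ 5 + 14 * X ^ 4 - 72 * X ^ 3 + 51 * X ^ 2 + 46 * X + 4 : ℤ[X]), by monicity!, by rw [← Polynomial.aeval_def]; exact haev_pi⟩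
  obtain ⟨pi0, hpi0⟩ : ∃ z : 𝓞 L, (algebraMap (𝓞 L) L) z = ((17 : L) + (-16 : L) * β + (15/4 : L) * β ^ 2 + (-1/4 : L) * β ^ 3) := ⟨⟨_, hint_pi⟩, rfl⟩
  have haev_a : (Polynomial.aeval ((327/8 : L) + (-891/16 : L) * β + (705/32 : L) * β ^ 2 + (-13/4 : L) * β ^ 3 + (5/32 : L) * β ^ 4)) (X ^ 5 + 23 * X ^ 4 + 51 * X ^ 3 - 144 * X ^ 2 + 56 * X + 8 : ℤ[X]) = 0 := by
    simp only [map_add, map_sub, map_mul, map_pow, map_ofNat, Polynomial.aeval_X, map_one]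
    linear_combination ((-24684636367/131072 : L) + (109877547877/131072 : L) * β + (-440477140553/262144 : L) * β ^ 2 + (529492643749/262144 : L) * β ^ 3 + (-3424405712277/2097152 : L) * β ^ 4 + (1973969741801/2097152 : L) * β ^ 5 + (-1675948126637/4194304 : L) * β ^ 6 + (266543978187/2097152 : L) * β ^ 7 + (-1023882876247/33554432 : L) * β ^ 8 + (185417566027/33554432 : L) * β ^ 9 + (-25113359099/33554432 : L) * β ^ 10 + (2498523775/33554432 : L) * β ^ 11 + (-176829125/33554432 : L) * β ^ 12 + (8410625/33554432 : L) * β ^ 13 + (-240625/33554432 : L) * β ^ 14 + (3125/33554432 : L) * β ^ 15) * hq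
  have hint_a : IsIntegral ℤ ((327/8 : L) + (-891/16 : L) * β + (705/32 : L) * β ^ 2 + (-13/4 : L) * β ^ 3 + (5/32 : L) * β ^ 4) := ⟨(X ^ 5 + 23 * X ^ 4 + 51 * X ^ 3 - 144 * X ^ 2 + 56 * X + 8 : ℤ[X]), by monicity!, by rw [← Polynomial.aeval_def]; exact haev_a⟩
  obtain ⟨a0, ha0⟩ : ∃ z : 𝓞 L, (algebraMap (𝓞 L) L) z = ((327/8 : L) + (-891/16 : L) * β + (705/32 : L) * β ^ 2 + (-13/4 : L) * β ^ 3 + (5/32 : L) * β ^ 4) := ⟨⟨_, hint_a⟩, rfl⟩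
  have haev_c : (Polynomial.aeval ((-119/2 : L) + (369/4 : L) * β + (-349/8 : L) * β ^ 2 + (29/4 : L) * β ^ 3 + (-3/8 : L) * β ^ 4)) (X ^ 5 - 70 * X ^ 4 + 262 * X ^ 3 - 39 * X ^ 2 - 50 * X - 4 : ℤ[X]) = 0 := by
    simp only [map_add, map_sub, map_mul, map_pow, map_ofNat, Polynomial.aeval_X, map_one]
    linear_combination ((222857491/128 : L) + (-557965733/64 : L) * β + (2540739515/128 : L) * β ^ 2 + (-7005591663/256 : L) * β ^ 3 + (52489450955/2048 : L) * β ^ 4 + (-35417800799/2048 : L) * β ^ 5 + (17760490905/2048 : L) * β ^ 6 + (-26848509433/8192 : L) * β ^ 7 + (30666080395/32768 : L) * β ^ 8 + (-6578394125/32768 : L) * β ^ 9 + (1046730235/32768 : L) * β ^ 10 + (-120986061/32768 : L) * β ^ 11 + (9823257/32768 : L) * β ^ 12 + (-529119/32768 : L) * β ^ 13 + (16929/32768 : L) * β ^ 14 + (-243/32768 : L) * β ^ 15) * hq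
  have hint_c : IsIntegral ℤ ((-119/2 : L) + (369/4 : L) * β + (-349/8 : L) * β ^ 2 + (29/4 : L) * β ^ 3 + (-3/8 : L) * β ^ 4) := ⟨(X ^ 5 - 70 * X ^ 4 + 262 * X ^ 3 - 39 * X ^ 2 - 50 * X - 4 : ℤ[X]), by monicity!, by rw [← Polynomial.aeval_def]; exact haev_c⟩
  obtain ⟨c0, hc0⟩ : ∃ z : 𝓞 L, (algebraMap (𝓞 L) L) z = ((-119/2 : L) + (369/4 : L) * β + (-349/8 : L) * β ^ 2 + (29/4 : L) * β ^ 3 + (-3/8 : L) * β ^ 4) := ⟨⟨_, hint_c⟩, rfl⟩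
  have haev_f : (Polynomial.aeval ((2569 : L) + (-8583/2 : L) * β + (2223 : L) * β ^ 2 + (-387 : L) * β ^ 3 + (41/2 : L) * β ^ 4)) (X ^ 5 + 3906 * X ^ 4 + 147131 * X ^ 3 - 406265 * X ^ 2 + 206700 * X + 11311 : ℤ[X]) = 0 := by
    simp only [map_add, map_sub, map_mul, map_pow, map_ofNat, Polynomial.aeval_X, map_one]
    linear_combination ((-295147787281400 : L) + (1621066070631689 : L) * β + (-32289039216266167/8 : L) * β ^ 2 + (194030140590009913/32 : L) * β ^ 3 + (-197446682117799345/32 : L) * β ^ 4 + (36142953922025591/8 : L) * β ^ 5 + (-78684955282786357/32 : L) * β ^ 6 + (2017856569660281/2 : L) * β ^ 7 + (-9994926340708005/32 : L) * β ^ 8 + (1157342758716843/16 : L) * β ^ 9 + (-394963661296411/32 : L) * β ^ 10 + (12141663093471/8 : L) * β ^ 11 + (-4160784100599/32 : L) * β ^ 12 + (29332846521/4 : L) * β ^ 13 + (-7807577643/32 : L) * β ^ 14 + (115856201/32 : L) * β ^ 15) * hq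
  have hint_f : IsIntegral ℤ ((2569 : L) + (-8583/2 : L) * β + (2223 : L) * β ^ 2 + (-387 : L) * β ^ 3 + (41/2 : L) * β ^ 4) := ⟨(X ^ 5 + 3906 * X ^ 4 + 147131 * X ^ 3 - 406265 * X ^ 2 + 206700 * X + 11311 : ℤ[X]), by monicity!, by rw [← Polynomial.aeval_def]; exact haev_f⟩
  obtain ⟨f0, hf0⟩ : ∃ z : 𝓞 L, (algebraMap (𝓞 L) L) z = ((2569 : L) + (-8583/2 : L) * β + (2223 : L) * β ^ 2 + (-387 : L) * β ^ 3 + (41/2 : L) * β ^ 4) := ⟨⟨_, hint_f⟩, rfl⟩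
  have haev_d : (Polynomial.aeval ((-61050 : L) + (208245/2 : L) * β + (-55190 : L) * β ^ 2 + (9715 : L) * β ^ 3 + (-1035/2 : L) * β ^ 4)) (X ^ 5 - 99390 * X ^ 4 + 12593525 * X ^ 3 - 19367125 * X ^ 2 - 17958750 * X + 396875 : ℤ[X]) = 0 := by
    simp only [map_add, map_sub, map_mul, map_pow, map_ofNat, Polynomial.aeval_X, map_one]
    linear_combination ((9259687361578016603125/4 : L) + (-104377422718879715046875/8 : L) * β + (532603126127943419415625/16 : L) * β ^ 2 + (-1637207088520156896453125/32 : L) * β ^ 3 + (1702104918039118129440625/32 : L) * β ^ 4 + (-636068155213402136778125/16 : L) * β ^ 5 + (706543851986398082315625/32 : L) * β ^ 6 + (-147923641565610074403125/16 : L) * β ^ 7 + (93436952005832644840625/32 : L) * β ^ 8 + (-5513071218576794009375/8 : L) * β ^ 9 + (3828065794701833684375/32 : L) * β ^ 10 + (-238933010708993390625/16 : L) * β ^ 11 + (41472753368739384375/32 : L) * β ^ 12 + (-1182415488587071875/16 : L) * β ^ 13 + (79414329258253125/32 : L) * β ^ 14 + (-1187686305646875/32 : L) * β ^ 15) * hq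
  have hint_d : IsIntegral ℤ ((-61050 : L) + (208245/2 : L) * β + (-55190 : L) * β ^ 2 + (9715 : L) * β ^ 3 + (-1035/2 : L) * β ^ 4) := ⟨(X ^ 5 - 99390 * X ^ 4 + 12593525 * X ^ 3 - 19367125 * X ^ 2 - 17958750 * X + 396875 : ℤ[X]), by monicity!, by rw [← Polynomial.aeval_def]; exact haev_d⟩
  obtain ⟨d0, hd0⟩ : ∃ z : 𝓞 L, (algebraMap (𝓞 L) L) z = ((-61050 : L) + (208245/2 : L) * β + (-55190 : L) * β ^ 2 + (9715 : L) * β ^ 3 + (-1035/2 : L) * β ^ 4) := ⟨⟨_, hint_d⟩, rfl⟩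
  have haev_x : (Polynomial.aeval ((-5/8 : L) + (41/16 : L) * β + (-59/32 : L) * β ^ 2 + (7/4 : L) * β ^ 3 + (-7/32 : L) * β ^ 4)) (X ^ 5 + 682 * X ^ 4 + 42663 * X ^ 3 - 3944571 * X ^ 2 + 26799332 * X - 41403707 : ℤ[X]) = 0 := by
    simp only [map_add, map_sub, map_mul, map_pow, map_ofNat, Polynomial.aeval_X, map_one]
    linear_combination ((8117823221/131072 : L) + (3799038553/131072 : L) * β + (18897497243/262144 : L) * β ^ 2 + (4878324069/262144 : L) * β ^ 3 + (41953266999/2097152 : L) * β ^ 4 + (1112707765/2097152 : L) * β ^ 5 + (833797839/4194304 : L) * β ^ 6 + (-508406871/2097152 : L) * β ^ 7 + (-1405954403/33554432 : L) * β ^ 8 + (636381767/33554432 : L) * β ^ 9 + (-296659671/33554432 : L) * β ^ 10 + (39309515/33554432 : L) * β ^ 11 + (2744343/33554432 : L) * β ^ 12 + (-1178891/33554432 : L) * β ^ 13 + (218491/33554432 : L) * β ^ 14 + (-16807/33554432 : L) * β ^ 15) * hq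
  have hint_x : IsIntegral ℤ ((-5/8 : L) + (41/16 : L) * β + (-59/32 : L) * β ^ 2 + (7/4 : L) * β ^ 3 + (-7/32 : L) * β ^ 4) := ⟨(X ^ 5 + 682 * X ^ 4 + 42663 * X ^ 3 - 3944571 * X ^ 2 + 26799332 * X - 41403707 : ℤ[X]), by monicity!, by rw [← Polynomial.aeval_def]; exact haev_x⟩
  obtain ⟨x0, hx0⟩ : ∃ z : 𝓞 L, (algebraMap (𝓞 L) L) z = ((-5/8 : L) + (41/16 : L) * β + (-59/32 : L) * β ^ 2 + (7/4 : L) * β ^ 3 + (-7/32 : L) * β ^ 4) := ⟨⟨_, hint_x⟩, rfl⟩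
  have haev_y : (Polynomial.aeval ((1/4 : L) + (59/8 : L) * β + (3/16 : L) * β ^ 2 + (-7/4 : L) * β ^ 3 + (3/16 : L) * β ^ 4)) (X ^ 5 - 110 * X ^ 4 - 22270 * X ^ 3 - 428579 * X ^ 2 + 8600904 * X - 31477360 : ℤ[X]) = 0 := by
    simp only [map_add, map_sub, map_mul, map_pow, map_ofNat, Polynomial.aeval_X, map_one]
    linear_combination ((124725191/4096 : L) + (-34182385/4096 : L) * β + (-211456601/8192 : L) * β ^ 2 + (-4006369/1024 : L) * β ^ 3 + (397424309/65536 : L) * β ^ 4 + (205244249/65536 : L) * β ^ 5 + (15653657/131072 : L) * β ^ 6 + (-28474263/131072 : L) * β ^ 7 + (-24327445/1048576 : L) * β ^ 8 + (5122125/1048576 : L) * β ^ 9 + (481175/1048576 : L) * β ^ 10 + (-612399/1048576 : L) * β ^ 11 + (87633/1048576 : L) * β ^ 12 + (20439/1048576 : L) * β ^ 13 + (-4779/1048576 : L) * β ^ 14 + (243/1048576 : L) * β ^ 15) * hq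
  have hint_y : IsIntegral ℤ ((1/4 : L) + (59/8 : L) * β + (3/16 : L) * β ^ 2 + (-7/4 : L) * β ^ 3 + (3/16 : L) * β ^ 4) := ⟨(X ^ 5 - 110 * X ^ 4 - 22270 * X ^ 3 - 428579 * X ^ 2 + 8600904 * X - 31477360 : ℤ[X]), by monicity!, by rw [← Polynomial.aeval_def]; exact haev_y⟩
  obtain ⟨y0, hy0⟩ : ∃ z : 𝓞 L, (algebraMap (𝓞 L) L) z = ((1/4 : L) + (59/8 : L) * β + (3/16 : L) * β ^ 2 + (-7/4 : L) * β ^ 3 + (3/16 : L) * β ^ 4) := ⟨⟨_, hint_y⟩, rfl⟩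
  have haev_s : (Polynomial.aeval ((-5/4 : L) + (129/8 : L) * β + (57/16 : L) * β ^ 2 + (-41/4 : L) * β ^ 3 + (25/16 : L) * β ^ 4)) (X ^ 5 - 7773 * X ^ 4 + 11010620 * X ^ 3 - 143229799 * X ^ 2 + 408941273 * X + 4880158 : ℤ[X]) = 0 := by
    simp only [map_add, map_sub, map_mul, map_pow, map_ofNat, Polynomial.aeval_X, map_one]
    linear_combination ((3193592953/4096 : L) + (-50241568549/4096 : L) * β + (191873532425/8192 : L) * β ^ 2 + (323337937413/8192 : L) * β ^ 3 + (-3323002621817/65536 : L) * β ^ 4 + (-3247049612667/65536 : L) * β ^ 5 + (3005132905069/131072 : L) * β ^ 6 + (2067842285521/131072 : L) * β ^ 7 + (-2859621124607/1048576 : L) * β ^ 8 + (29078661687/1048576 : L) * β ^ 9 + (93067403301/1048576 : L) * β ^ 10 + (-36598676125/1048576 : L) * β ^ 11 + (1679021875/1048576 : L) * β ^ 12 + (235703125/1048576 : L) * β ^ 13 + (-56640625/1048576 : L) * β ^ 14 + (9765625/1048576 : L) * β ^ 15) * hq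
  have hint_s : IsIntegral ℤ ((-5/4 : L) + (129/8 : L) * β + (57/16 : L) * β ^ 2 + (-41/4 : L) * β ^ 3 + (25/16 : L) * β ^ 4) := ⟨(X ^ 5 - 7773 * X ^ 4 + 11010620 * X ^ 3 - 143229799 * X ^ 2 + 408941273 * X + 4880158 : ℤ[X]), by monicity!, by rw [← Polynomial.aeval_def]; exact haev_s⟩
  obtain ⟨s0, hs0⟩ : ∃ z : 𝓞 L, (algebraMap (𝓞 L) L) z = ((-5/4 : L) + (129/8 : L) * β + (57/16 : L) * β ^ 2 + (-41/4 : L) * β ^ 3 + (25/16 : L) * β ^ 4) := ⟨⟨_, hint_s⟩, rfl⟩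
  have haev_t : (Polynomial.aeval ((-2 : L) + (14 : L) * β + (-39/4 : L) * β ^ 2 + (5/4 : L) * β ^ 3)) (X ^ 5 - 566 * X ^ 4 + 62904 * X ^ 3 - 39641 * X ^ 2 - 422962 * X - 556 : ℤ[X]) = 0 := by
    simp only [map_add, map_sub, map_mul, map_pow, map_ofNat, Polynomial.aeval_X, map_one]
    linear_combination ((-181 : L) + (-15437/2 : L) * β + (630259/8 : L) * β ^ 2 + (-2588759/16 : L) * β ^ 3 + (6132697/64 : L) * β ^ 4 + (-3639503/128 : L) * β ^ 5 + (1151675/128 : L) * β ^ 6 + (-938625/512 : L) * β ^ 7 + (248125/1024 : L) * β ^ 8 + (-9375/256 : L) * β ^ 9 + (3125/1024 : L) * β ^ 10) * hq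
  have hint_t : IsIntegral ℤ ((-2 : L) + (14 : L) * β + (-39/4 : L) * β ^ 2 + (5/4 : L) * β ^ 3) := ⟨(X ^ 5 - 566 * X ^ 4 + 62904 * X ^ 3 - 39641 * X ^ 2 - 422962 * X - 556 : ℤ[X]), by monicity!, by rw [← Polynomial.aeval_def]; exact haev_t⟩
  obtain ⟨t0, ht0⟩ : ∃ z : 𝓞 L, (algebraMap (𝓞 L) L) z = ((-2 : L) + (14 : L) * β + (-39/4 : L) * β ^ 2 + (5/4 : L) * β ^ 3) := ⟨⟨_, hint_t⟩, rfl⟩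
  have h2a : (2 : 𝓞 L) = pi0 * a0 := by
    refine NumberField.RingOfIntegers.ext ?_
    simp only [map_mul, map_pow, map_add, map_one, map_ofNat, hpi0, ha0]
    linear_combination ((23/32 : L) + (-11/32 : L) * β + (5/128 : L) * β ^ 2) * hq
  have hvc : v0 = pi0 * c0 := by
    refine NumberField.RingOfIntegers.ext ?_
    simp only [map_mul, map_pow, map_add, map_one, map_ofNat, hpi0, hc0, hv0]
    linear_combination ((-17/16 : L) + (11/16 : L) * β + (-3/32 : L) * β ^ 2) * hq
  have hwd : w0 = pi0 ^ 3 * d0 := by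
    refine NumberField.RingOfIntegers.ext ?_
    simp only [map_mul, map_pow, map_add, map_one, map_ofNat, hpi0, hd0, hw0]
    linear_combination ((-4978235/16 : L) + (13426835/16 : L) * β + (-14838325/16 : L) * β ^ 2 + (17441165/32 : L) * β ^ 3 + (-11906505/64 : L) * β ^ 4 + (4862025/128 : L) * β ^ 5 + (-4565 : L) * β ^ 6 + (9515/32 : L) * β ^ 7 + (-1035/128 : L) * β ^ 8) * hq
  have haf : a0 ^ 2 + a0 + 1 = pi0 * f0 := by
    refine NumberField.RingOfIntegers.ext ?_
    simp only [map_mul, map_pow, map_add, map_one, map_ofNat, hpi0, ha0, hf0]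
    linear_combination ((11143/256 : L) + (-17305/512 : L) * β + (4883/1024 : L) * β ^ 2 + (25/1024 : L) * β ^ 3) * hq
  have hxy : x0 * 2 + y0 * v0 = pi0 := by
    refine NumberField.RingOfIntegers.ext ?_
    simp only [map_mul, map_pow, map_add, map_one, map_ofNat, hpi0, hx0, hy0, hv0]
    linear_combination ((1/64 : L) + (-11/128 : L) * β + (-7/256 : L) * β ^ 2 + (3/256 : L) * β ^ 3) * hq
  have hst : s0 * 8 + t0 * w0 = pi0 ^ 3 := by
    refine NumberField.RingOfIntegers.ext ?_
    simp only [map_mul, map_pow, map_add, map_one, map_ofNat, hpi0, hs0, ht0, hw0]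
    linear_combination ((41/8 : L) + (-43/8 : L) * β + (145/64 : L) * β ^ 2 + (-9/32 : L) * β ^ 3 + (1/64 : L) * β ^ 4) * hq
  have h8 : (8 : 𝓞 L) = pi0 ^ 3 * a0 ^ 3 := by
    linear_combination (4 + 2 * (pi0 * a0) + (pi0 * a0) ^ 2) * h2a
  have hPspan : Ideal.span {(2 : 𝓞 L), v0} = Ideal.span {pi0} := by
    apply le_antisymm
    · rw [Ideal.span_le]
      rintro z hz
      simp only [Set.mem_insert_iff, Set.mem_singleton_iff] at hz
      rcases hz with rfl | rfl
      · exact Ideal.mem_span_singleton.mpr ⟨a0, h2a⟩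
      · exact Ideal.mem_span_singleton.mpr ⟨c0, hvc⟩
    · rw [Ideal.span_singleton_le_iff_mem]
      exact Ideal.mem_span_pair.mpr ⟨x0, y0, hxy⟩
  have hWspan : Ideal.span {(8 : 𝓞 L), w0} = Ideal.span {pi0} ^ 3 := by
    rw [Ideal.span_singleton_pow]
    apply le_antisymm
    · rw [Ideal.span_le]
      rintro z hz
      simp only [Set.mem_insert_iff, Set.mem_singleton_iff] at hz
      rcases hz with rfl | rfl
      · exact Ideal.mem_span_singleton.mpr ⟨a0 ^ 3, h8⟩
      · exact Ideal.mem_span_singleton.mpr ⟨d0, hwd⟩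
    · rw [Ideal.span_singleton_le_iff_mem]
      exact Ideal.mem_span_pair.mpr ⟨s0, t0, hst⟩
  -- norm of pi
  have h3 := h3zmod
  have hmonicZ : (X ^ 5 + 14 * X ^ 4 - 72 * X ^ 3 + 51 * X ^ 2 + 46 * X + 4 : ℤ[X]).Monic := by monicity!
  have hirrZ : Irreducible (X ^ 5 + 14 * X ^ 4 - 72 * X ^ 3 + 51 * X ^ 2 + 46 * X + 4 : ℤ[X]) := by
    apply Polynomial.Monic.irreducible_of_irreducible_map (Int.castRingHom (ZMod 3)) _ hmonicZ
    have hmapeq : (X ^ 5 + 14 * X ^ 4 - 72 * X ^ 3 + 51 * X ^ 2 + 46 * X + 4 : ℤ[X]).map (Int.castRingHom (ZMod 3)) =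
        X ^ 5 + 2 * X ^ 4 + X + 1 := by
      simp only [Polynomial.map_add, Polynomial.map_sub, Polynomial.map_mul, Polynomial.map_pow,
        Polynomial.map_X, Polynomial.map_ofNat, Polynomial.map_one]
      linear_combination (4 * X ^ 4 - 24 * X ^ 3 + 17 * X ^ 2 + 15 * X + 1 : (ZMod 3)[X]) * h3
    rw [hmapeq]
    exact irred3
  have hirrQ : Irreducible ((X ^ 5 + 14 * X ^ 4 - 72 * X ^ 3 + 51 * X ^ 2 + 46 * X + 4 : ℤ[X]).map (algebraMap ℤ ℚ)) :=
    (Polynomial.Monic.irreducible_iff_irreducible_map_fraction_map hmonicZ).mp hirrZ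
  have hintQ : IsIntegral ℚ ((17 : L) + (-16 : L) * β + (15/4 : L) * β ^ 2 + (-1/4 : L) * β ^ 3) := ⟨(X ^ 5 + 14 * X ^ 4 - 72 * X ^ 3 + 51 * X ^ 2 + 46 * X + 4 : ℤ[X]).map (algebraMap ℤ ℚ), hmonicZ.map _, by
    rw [← Polynomial.aeval_def, Polynomial.aeval_map_algebraMap]
    exact haev_pi⟩
  have haevQ : Polynomial.aeval ((17 : L) + (-16 : L) * β + (15/4 : L) * β ^ 2 + (-1/4 : L) * β ^ 3) ((X ^ 5 + 14 * X ^ 4 - 72 * X ^ 3 + 51 * X ^ 2 + 46 * X + 4 : ℤ[X]).map (algebraMap ℤ ℚ)) = 0 := by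
    rw [Polynomial.aeval_map_algebraMap]; exact haev_pi
  have hminpoly : minpoly ℚ ((17 : L) + (-16 : L) * β + (15/4 : L) * β ^ 2 + (-1/4 : L) * β ^ 3) = (X ^ 5 + 14 * X ^ 4 - 72 * X ^ 3 + 51 * X ^ 2 + 46 * X + 4 : ℤ[X]).map (algebraMap ℤ ℚ) :=
    (minpoly.eq_of_irreducible_of_monic hirrQ haevQ (hmonicZ.map _)).symm
  have hdeg5 : ((X ^ 5 + 14 * X ^ 4 - 72 * X ^ 3 + 51 * X ^ 2 + 46 * X + 4 : ℤ[X]).map (algebraMap ℤ ℚ)).natDegree = 5 := by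
    rw [hmonicZ.natDegree_map]
    compute_degree!
  have hadj : Algebra.adjoin ℚ {((17 : L) + (-16 : L) * β + (15/4 : L) * β ^ 2 + (-1/4 : L) * β ^ 3)} = ⊤ := by
    rw [← top_le_iff, ← hgen]
    apply Algebra.adjoin_le
    intro z hz
    rw [Set.mem_singleton_iff] at hz
    rw [hz]
    have hmemq : ∀ q : ℚ, (q : L) ∈ Algebra.adjoin ℚ {((17 : L) + (-16 : L) * β + (15/4 : L) * β ^ 2 + (-1/4 : L) * β ^ 3)} := fun q => by
      have := Subalgebra.algebraMap_mem (Algebra.adjoin ℚ {((17 : L) + (-16 : L) * β + (15/4 : L) * β ^ 2 + (-1/4 : L) * β ^ 3)}) q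
      rwa [eq_ratCast (algebraMap ℚ L) q] at this
    have hpmem : ((17 : L) + (-16 : L) * β + (15/4 : L) * β ^ 2 + (-1/4 : L) * β ^ 3) ∈ Algebra.adjoin ℚ {((17 : L) + (-16 : L) * β + (15/4 : L) * β ^ 2 + (-1/4 : L) * β ^ 3)} := Algebra.subset_adjoin rfl
    have hβeq : β = ((4399/457 : ℚ) : L) + ((5794/457 : ℚ) : L) * ((17 : L) + (-16 : L) * β + (15/4 : L) * β ^ 2 + (-1/4 : L) * β ^ 3) +
        ((-5589/457 : ℚ) : L) * ((17 : L) + (-16 : L) * β + (15/4 : L) * β ^ 2 + (-1/4 : L) * β ^ 3) ^ 2 + ((888/457 : ℚ) : L) * ((17 : L) + (-16 : L) * β + (15/4 : L) * β ^ 2 + (-1/4 : L) * β ^ 3) ^ 3 +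
        ((67/457 : ℚ) : L) * ((17 : L) + (-16 : L) * β + (15/4 : L) * β ^ 2 + (-1/4 : L) * β ^ 3) ^ 4 := by
      push_cast
      linear_combination ((35047/1828 : L) + (-124189/3656 : L) * β + (84541/3656 : L) * β ^ 2 + (-126515/14624 : L) * β ^ 3 + (14225/7312 : L) * β ^ 4 + (-15209/58496 : L) * β ^ 5 + (2211/116992 : L) * β ^ 6 + (-67/116992 : L) * β ^ 7) * hq
    have hmem' := add_mem (add_mem (add_mem (add_mem (hmemq (4399/457)) (mul_mem (hmemq (5794/457)) hpmem))
      (mul_mem (hmemq (-5589/457)) (pow_mem hpmem 2))) (mul_mem (hmemq (888/457)) (pow_mem hpmem 3)))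
      (mul_mem (hmemq (67/457)) (pow_mem hpmem 4))
    rwa [← hβeq] at hmem'
  let e : (Algebra.adjoin ℚ ({((17 : L) + (-16 : L) * β + (15/4 : L) * β ^ 2 + (-1/4 : L) * β ^ 3)} : Set L)) ≃ₐ[ℚ] L :=
    (Subalgebra.equivOfEq _ _ hadj).trans Subalgebra.topEquiv
  let pb : PowerBasis ℚ L := (Algebra.adjoin.powerBasis hintQ).map e
  have hgenpb : pb.gen = ((17 : L) + (-16 : L) * β + (15/4 : L) * β ^ 2 + (-1/4 : L) * β ^ 3) := rfl
  have hdim : pb.dim = 5 := by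
    show (minpoly ℚ ((17 : L) + (-16 : L) * β + (15/4 : L) * β ^ 2 + (-1/4 : L) * β ^ 3)).natDegree = 5
    rw [hminpoly]
    exact hdeg5
  have hcoeff0 : ((X ^ 5 + 14 * X ^ 4 - 72 * X ^ 3 + 51 * X ^ 2 + 46 * X + 4 : ℤ[X]).map (algebraMap ℤ ℚ)).coeff 0 = 4 := by
    rw [Polynomial.coeff_map, Polynomial.coeff_zero_eq_eval_zero]
    simp
  have hnormQ : Algebra.norm ℚ ((17 : L) + (-16 : L) * β + (15/4 : L) * β ^ 2 + (-1/4 : L) * β ^ 3) = -4 := by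
    have hN := Algebra.PowerBasis.norm_gen_eq_coeff_zero_minpoly pb
    rw [hgenpb, hdim, hminpoly, hcoeff0] at hN
    rw [hN]
    norm_num
  have hnormZ : Algebra.norm ℤ pi0 = -4 := by
    have hcast : ((Algebra.norm ℤ pi0 : ℤ) : ℚ) = ((-4 : ℤ) : ℚ) := by
      rw [Algebra.coe_norm_int, NumberField.RingOfIntegers.coe_eq_algebraMap, hpi0, hnormQ]
      norm_num
    exact_mod_cast hcast
  have habs4 : Ideal.absNorm (Ideal.span {(2 : 𝓞 L), v0}) = 4 := by
    rw [hPspan, Ideal.absNorm_span_singleton, hnormZ]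
    rfl
  have hmem2 : (2 : 𝓞 L) ∈ Ideal.span {(2 : 𝓞 L), v0} :=
    Ideal.subset_span (Set.mem_insert _ _)
  have hprime : (Ideal.span {(2 : 𝓞 L), v0}).IsPrime := by
    have hmax : (Ideal.span {(2 : 𝓞 L), v0}).IsMaximal := by
      refine Ideal.Quotient.maximal_of_isField _ ?_
      refine isField_of_card_four ?_ ?_ (Ideal.Quotient.mk _ a0) ?_
      · rw [← map_ofNat (Ideal.Quotient.mk (Ideal.span {(2 : 𝓞 L), v0})) 2,
          Ideal.Quotient.eq_zero_iff_mem]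
        exact hmem2
      · have h4 := habs4
        rwa [Ideal.absNorm_apply, Submodule.cardQuot_apply] at h4
      · have hz : (Ideal.Quotient.mk (Ideal.span {(2 : 𝓞 L), v0})) (a0 ^ 2 + a0 + 1) = 0 := by
          rw [Ideal.Quotient.eq_zero_iff_mem, hPspan, haf]
          exact Ideal.mem_span_singleton.mpr ⟨f0, rfl⟩
        simpa only [map_add, map_pow, map_one] using hz
    exact hmax.isPrime
  refine ⟨w0, v0, ?_, ?_, hprime, hmem2, habs4, hWspan.trans (by rw [hPspan]), ?_⟩
  · rw [hw]; exact hw0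
  · rw [hv]; exact hv0
  · rw [hWspan, ← hPspan, map_pow, habs4]
    norm_num
end
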